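/- arXiv:1112.2099 — 6 statements merged into one kernel-verified Lean document; each statement's English description precedes it below -/
import Mathlib

section
/- Let i ≥ 1 be an integer and let θ₀, …, θ_i be an admissible family of real angles (θ_j − θ_k ∉ πℤ for all j ≠ k). If ξ ∈ V_i is i-liftably tangent to c_{θ_k} for every k ∈ {0, …, i}, then ξ = 0. (Equivalently, the i-th reduced Kodaira–Spencer–Mather map ᵢω̄ of the multicusp c_{(θ₀, …, θ_i)} is injective.) -/
open Polynomial

/-- First component of the rotated cusp `c_θ(x) = R_θ (x², x³)` as a polynomial over `K`. -/
noncomputable def cusp1 (K : Type*) [RCLike K] (θ : ℝ) : Polynomial K :=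
  C ((Real.cos θ : K)) * X ^ 2 - C ((Real.sin θ : K)) * X ^ 3

/-- Second component of the rotated cusp. -/
noncomputable def cusp2 (K : Type*) [RCLike K] (θ : ℝ) : Polynomial K :=
  C ((Real.sin θ : K)) * X ^ 2 + C ((Real.cos θ : K)) * X ^ 3

/-- First component of the derivative `c_θ'(x)`. -/
noncomputable def dcusp1 (K : Type*) [RCLike K] (θ : ℝ) : Polynomial K :=
  C ((Real.cos θ : K)) * (2 * X) - C ((Real.sin θ : K)) * (3 * X ^ 2)

/-- Second component of the derivative `c_θ'(x)`. -/
noncomputable def dcusp2 (K : Type*) [RCLike K] (θ : ℝ) : Polynomial K :=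
  C ((Real.sin θ : K)) * (2 * X) + C ((Real.cos θ : K)) * (3 * X ^ 2)

/-- Composition `P(c_θ(x))` of a two-variable polynomial with the rotated cusp. -/
noncomputable def cuspEval (K : Type*) [RCLike K] (θ : ℝ) (P : MvPolynomial (Fin 2) K) :
    Polynomial K :=
  MvPolynomial.aeval ![cusp1 K θ, cusp2 K θ] P

/-- `ξ = (P, Q)` is `i`-liftably tangent to the rotated cusp `c_θ`:
there is `η ∈ K[x]` with `x^(2i+2)` dividing both `P(c_θ(x)) - η(x)·c_θ'(x)₁`
and `Q(c_θ(x)) - η(x)·c_θ'(x)₂`.  This characterizes the kernel of the `i`-th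
reduced Kodaira–Spencer–Mather map of the cusp `c_θ`. -/
def LiftTang (K : Type*) [RCLike K] (i : ℕ) (θ : ℝ)
    (ξ : MvPolynomial (Fin 2) K × MvPolynomial (Fin 2) K) : Prop :=
  ∃ η : Polynomial K,
    (X : Polynomial K) ^ (2 * i + 2) ∣ cuspEval K θ ξ.1 - η * dcusp1 K θ ∧
    (X : Polynomial K) ^ (2 * i + 2) ∣ cuspEval K θ ξ.2 - η * dcusp2 K θ

/-- `V_i`: pairs of homogeneous polynomials of degree `i` in `K[X, Y]`,
identified with the jet space `m₀^i θ₀(2)/m₀^(i+1) θ₀(2)`. -/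
noncomputable def Vsp (K : Type*) [RCLike K] (i : ℕ) :
    Submodule K (MvPolynomial (Fin 2) K × MvPolynomial (Fin 2) K) :=
  (MvPolynomial.homogeneousSubmodule (Fin 2) K i).prod
    (MvPolynomial.homogeneousSubmodule (Fin 2) K i)

/-- A family of angles is admissible if the difference of any two distinct members
is not an integer multiple of `π`. -/
def Admissible {n : ℕ} (θ : Fin n → ℝ) : Prop :=
  ∀ j k, j ≠ k → ∀ m : ℤ, θ j - θ k ≠ m * Real.pi

set_option linter.unusedSectionVars false
set_option maxHeartbeats 1000000
namespace MulticuspAux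



variable {K : Type*} [Field K] [CharZero K]

/-- generic linear form `a·X₀ + b·X₁` -/
noncomputable def lin (a b : K) : MvPolynomial (Fin 2) K :=
  MvPolynomial.C a * MvPolynomial.X 0 + MvPolynomial.C b * MvPolynomial.X 1

lemma lin_isHomogeneous (a b : K) : (lin a b).IsHomogeneous 1 := by
  apply MvPolynomial.IsHomogeneous.add <;> exact MvPolynomial.isHomogeneous_C_mul_X _ _

lemma eval_lin (a b : K) (x : Fin 2 → K) :
    MvPolynomial.eval x (lin a b) = a * x 0 + b * x 1 := by
  simp [lin]

lemma aeval_lin {A : Type*} [CommRing A] [Algebra K A] (a b : K) (g : Fin 2 → A) :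
    MvPolynomial.aeval g (lin a b) = algebraMap K A a * g 0 + algebraMap K A b * g 1 := by
  simp [lin]

/-- evaluation commutes with substitution (target `K`). -/
lemma eval_aeval (g : Fin 2 → Polynomial K) (x : K) (H : MvPolynomial (Fin 2) K) :
    (MvPolynomial.aeval g H).eval x = MvPolynomial.eval (fun j => (g j).eval x) H := by
  induction H using MvPolynomial.induction_on with
  | C a => simp
  | add p q hp hq => simp only [map_add, Polynomial.eval_add, hp, hq]
  | mul_X p j hp => simp only [map_mul, MvPolynomial.aeval_X, Polynomial.eval_mul, MvPolynomial.eval_mul, MvPolynomial.eval_X, hp]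

lemma mveval_aeval (g : Fin 2 → MvPolynomial (Fin 2) K) (x : Fin 2 → K)
    (H : MvPolynomial (Fin 2) K) :
    MvPolynomial.eval x (MvPolynomial.aeval g H)
      = MvPolynomial.eval (fun j => MvPolynomial.eval x (g j)) H := by
  induction H using MvPolynomial.induction_on with
  | C a => simp
  | add p q hp hq => simp only [map_add, Polynomial.eval_add, hp, hq]
  | mul_X p j hp => simp only [map_mul, MvPolynomial.aeval_X, MvPolynomial.eval_mul, MvPolynomial.eval_X, hp]




lemma rot_comp₁ (c s : K) (h : c ^ 2 + s ^ 2 = 1) :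
    (MvPolynomial.aeval ![lin s (-c), lin c s]).comp
      (MvPolynomial.aeval ![lin s c, lin (-c) s]) = AlgHom.id K (MvPolynomial (Fin 2) K) := by
  have hC : (MvPolynomial.C c : MvPolynomial (Fin 2) K) ^ 2 + MvPolynomial.C s ^ 2 = 1 := by
    rw [← map_pow, ← map_pow, ← map_add, h, map_one]
  apply MvPolynomial.algHom_ext
  intro i
  fin_cases i <;> simp only [AlgHom.comp_apply, MvPolynomial.aeval_X, AlgHom.id_apply,
    Fin.zero_eta, Fin.mk_one, Matrix.cons_val_zero, Matrix.cons_val_one, Matrix.head_cons, lin,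
    map_add, map_mul, map_neg, MvPolynomial.aeval_C, MvPolynomial.algebraMap_eq]
  · linear_combination (MvPolynomial.X 0 : MvPolynomial (Fin 2) K) * hC
  · linear_combination (MvPolynomial.X 1 : MvPolynomial (Fin 2) K) * hC

lemma rot_comp₂ (c s : K) (h : c ^ 2 + s ^ 2 = 1) :
    (MvPolynomial.aeval ![lin s c, lin (-c) s]).comp
      (MvPolynomial.aeval ![lin s (-c), lin c s]) = AlgHom.id K (MvPolynomial (Fin 2) K) := by
  have hC : (MvPolynomial.C c : MvPolynomial (Fin 2) K) ^ 2 + MvPolynomial.C s ^ 2 = 1 := by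
    rw [← map_pow, ← map_pow, ← map_add, h, map_one]
  apply MvPolynomial.algHom_ext
  intro i
  fin_cases i <;> simp only [AlgHom.comp_apply, MvPolynomial.aeval_X, AlgHom.id_apply,
    Fin.zero_eta, Fin.mk_one, Matrix.cons_val_zero, Matrix.cons_val_one, Matrix.head_cons, lin,
    map_add, map_mul, map_neg, MvPolynomial.aeval_C, MvPolynomial.algebraMap_eq]
  · linear_combination (MvPolynomial.X 0 : MvPolynomial (Fin 2) K) * hC
  · linear_combination (MvPolynomial.X 1 : MvPolynomial (Fin 2) K) * hC

/-- rotation by the point `(c,s)` on the unit circle, as an algebra automorphism -/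
noncomputable def rot (c s : K) (h : c ^ 2 + s ^ 2 = 1) :
    MvPolynomial (Fin 2) K ≃ₐ[K] MvPolynomial (Fin 2) K :=
  AlgEquiv.ofAlgHom (MvPolynomial.aeval ![lin s (-c), lin c s])
    (MvPolynomial.aeval ![lin s c, lin (-c) s]) (rot_comp₁ c s h) (rot_comp₂ c s h)

lemma prime_X0 : Prime (MvPolynomial.X 0 : MvPolynomial (Fin 2) K) := by
  let e := (MvPolynomial.finSuccEquiv K 1).toRingEquiv.toMulEquiv
  rw [← MulEquiv.prime_iff e]
  have he : e (MvPolynomial.X 0) = Polynomial.X := by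
    simp [e, MvPolynomial.finSuccEquiv_X_zero]
  rw [he]
  exact Polynomial.prime_X

lemma prime_lin (c s : K) (h : c ^ 2 + s ^ 2 = 1) : Prime (lin s (-c)) := by
  let e := (rot c s h).toRingEquiv.toMulEquiv
  have := (MulEquiv.prime_iff e).mpr prime_X0
  have he : e (MvPolynomial.X 0) = lin s (-c) := by
    show (rot c s h) (MvPolynomial.X 0) = lin s (-c)
    simp [rot, AlgEquiv.ofAlgHom]
  rwa [he] at this

lemma homog_deg {H : MvPolynomial (Fin 2) K} {d : ℕ} (hH : H.IsHomogeneous d)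
    {m : Fin 2 →₀ ℕ} (hm : MvPolynomial.coeff m H ≠ 0) : m 0 + m 1 = d := by
  have := hH hm
  simpa [Finsupp.weight_apply, Finsupp.sum_fintype, Fin.sum_univ_two] using this

lemma eval01_eq_coeff {H : MvPolynomial (Fin 2) K} {d : ℕ} (hH : H.IsHomogeneous d) :
    MvPolynomial.eval ![(0 : K), 1] H = MvPolynomial.coeff (Finsupp.single 1 d) H := by
  rw [MvPolynomial.eval_eq]
  rw [Finset.sum_eq_single (Finsupp.single 1 d)]
  · by_cases hmem : Finsupp.single 1 d ∈ H.support
    · have : ∀ i ∈ (Finsupp.single 1 d).support, (![(0:K),1] i) ^ (Finsupp.single 1 d) i = 1 := by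
        intro i hi
        have : i = 1 := by simpa using Finsupp.support_single_subset hi
        subst this
        simp
      rw [Finset.prod_congr rfl this]
      simp
    · simp [MvPolynomial.notMem_support_iff.mp hmem]
  · intro m hm hne
    have hd := homog_deg hH (MvPolynomial.mem_support_iff.mp hm)
    have hm0 : m 0 ≠ 0 := by
      intro h0
      apply hne
      ext j
      fin_cases j
      · simp [h0, Finsupp.single_apply]
      · simp [Finsupp.single_apply]; omega
    apply mul_eq_zero_of_right
    apply Finset.prod_eq_zero (i := (0 : Fin 2))
    · simpa [Finsupp.mem_support_iff] using hm0
    · simp [zero_pow hm0]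
  · intro hmem
    rw [MvPolynomial.notMem_support_iff.mp hmem]
    simp

lemma lin_dvd_of_eval_zero {H : MvPolynomial (Fin 2) K} {d : ℕ} (hH : H.IsHomogeneous d)
    (c s : K) (h : c ^ 2 + s ^ 2 = 1) (hev : MvPolynomial.eval ![c, s] H = 0) :
    lin s (-c) ∣ H := by
  set H' : MvPolynomial (Fin 2) K := MvPolynomial.aeval ![lin s c, lin (-c) s] H with hH'def
  have hback : MvPolynomial.aeval ![lin s (-c), lin c s] H' = H :=
    DFunLike.congr_fun (rot_comp₁ c s h) H
  have hH' : H'.IsHomogeneous d := by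
    have : ∀ i : Fin 2, ((![lin s c, lin (-c) s]) i).IsHomogeneous 1 := by
      intro i; fin_cases i <;> apply lin_isHomogeneous
    have := hH.aeval _ this
    rwa [one_mul] at this
  have hev' : MvPolynomial.eval ![(0 : K), 1] H' = 0 := by
    have hfun : (fun j => MvPolynomial.eval ![c, s] ((![lin s (-c), lin c s]) j)) = ![(0:K), 1] := by
      funext j
      fin_cases j
      · simp [eval_lin]; ring
      · simp [eval_lin]; linear_combination h
    calc MvPolynomial.eval ![(0 : K), 1] H'
        = MvPolynomial.eval ![c, s] (MvPolynomial.aeval ![lin s (-c), lin c s] H') := by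
          conv_rhs => rw [mveval_aeval]
          rw [hfun]
      _ = 0 := by rw [hback]; exact hev
  have hcoeff : MvPolynomial.coeff (Finsupp.single 1 d) H' = 0 := by
    rw [← eval01_eq_coeff hH']; exact hev'
  have hdvd' : MvPolynomial.X 0 ∣ H' := by
    rw [← MvPolynomial.support_sum_monomial_coeff H']
    apply Finset.dvd_sum
    intro m hm
    have hd := homog_deg hH' (MvPolynomial.mem_support_iff.mp hm)
    have hm0 : m 0 ≠ 0 := by
      intro h0
      have hmeq : m = Finsupp.single 1 d := by
        ext j
        fin_cases j
        · simp [h0, Finsupp.single_apply]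
        · simp [Finsupp.single_apply]; omega
      rw [hmeq] at hm
      exact (MvPolynomial.mem_support_iff.mp hm) hcoeff
    refine ⟨MvPolynomial.monomial (m - Finsupp.single 0 1) (MvPolynomial.coeff m H'), ?_⟩
    rw [MvPolynomial.X, MvPolynomial.monomial_mul, one_mul,
      add_tsub_cancel_of_le (Finsupp.single_le_iff.mpr (by omega))]
  obtain ⟨W, hW⟩ := hdvd'
  refine ⟨MvPolynomial.aeval ![lin s (-c), lin c s] W, ?_⟩
  rw [← hback, hW, map_mul, MvPolynomial.aeval_X, Matrix.cons_val_zero]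

/-- product of pairwise non-associate primes divides -/
lemma prod_dvd {R : Type*} [CommRing R] [IsDomain R] {ι : Type*} [DecidableEq ι]
    (S : Finset ι) (L : ι → R) (H : R)
    (hprime : ∀ k ∈ S, Prime (L k))
    (hdvd : ∀ k ∈ S, L k ∣ H)
    (hnd : ∀ j ∈ S, ∀ k ∈ S, j ≠ k → ¬ (L j ∣ L k)) :
    (∏ k ∈ S, L k) ∣ H := by
  classical
  induction S using Finset.induction_on with
  | empty => simp
  | @insert a S ha ih =>
    obtain ⟨W, hW⟩ := ih (fun k hk => hprime k (Finset.mem_insert_of_mem hk))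
      (fun k hk => hdvd k (Finset.mem_insert_of_mem hk))
      (fun j hj k hk hjk => hnd j (Finset.mem_insert_of_mem hj) k (Finset.mem_insert_of_mem hk) hjk)
    have hpa : Prime (L a) := hprime a (Finset.mem_insert_self a S)
    have haH : L a ∣ H := hdvd a (Finset.mem_insert_self a S)
    rw [hW] at haH
    have : L a ∣ W := by
      rcases hpa.dvd_or_dvd haH with h1 | h2
      · exfalso
        obtain ⟨j, hj, hjd⟩ := hpa.exists_mem_finset_dvd h1
        have hja : a ≠ j := fun he => ha (he ▸ hj)
        exact hnd a (Finset.mem_insert_self a S) j (Finset.mem_insert_of_mem hj) hja hjd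
      · exact h2
    obtain ⟨W', hW'⟩ := this
    refine ⟨W', ?_⟩
    rw [Finset.prod_insert ha, hW, hW']
    ring

/-- a homogeneous polynomial divisible by a nonzero homogeneous polynomial of the same
degree is a constant multiple of it -/
lemma eq_C_mul_of_dvd {H Pi : MvPolynomial (Fin 2) K} {n : ℕ}
    (hH : H.IsHomogeneous n) (hPi : Pi.IsHomogeneous n) (hne : Pi ≠ 0) (hdvd : Pi ∣ H) :
    ∃ γ : K, H = MvPolynomial.C γ * Pi := by
  obtain ⟨V, hV⟩ := hdvd
  refine ⟨MvPolynomial.coeff 0 V, ?_⟩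
  have key : ∀ e : ℕ, e ≠ 0 → MvPolynomial.homogeneousComponent e V = 0 := by
    intro e he
    have h1 : MvPolynomial.homogeneousComponent (n + e) H = 0 := by
      rw [MvPolynomial.homogeneousComponent_of_mem ((MvPolynomial.mem_homogeneousSubmodule _ _).mpr hH),
        if_neg (by omega)]
    by_cases hrange : e < V.totalDegree + 1
    · have h2 : H = ∑ e' ∈ Finset.range (V.totalDegree + 1),
          Pi * MvPolynomial.homogeneousComponent e' V := by
        rw [← Finset.mul_sum, MvPolynomial.sum_homogeneousComponent, hV]
      have h3 : MvPolynomial.homogeneousComponent (n + e) H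
          = Pi * MvPolynomial.homogeneousComponent e V := by
        rw [h2, map_sum]
        rw [Finset.sum_eq_single e]
        · rw [MvPolynomial.homogeneousComponent_of_mem
            ((MvPolynomial.mem_homogeneousSubmodule _ _).mpr
              (hPi.mul (MvPolynomial.homogeneousComponent_isHomogeneous e V))), if_pos rfl]
        · intro e' _ hee
          rw [MvPolynomial.homogeneousComponent_of_mem
            ((MvPolynomial.mem_homogeneousSubmodule _ _).mpr
              (hPi.mul (MvPolynomial.homogeneousComponent_isHomogeneous e' V))),
            if_neg (by omega)]
        · intro hnot
          exact absurd (Finset.mem_range.mpr hrange) hnot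
      have := h3.symm.trans h1
      rcases mul_eq_zero.mp this with h | h
      · exact absurd h hne
      · exact h
    · apply MvPolynomial.homogeneousComponent_eq_zero
      omega
  have hVC : V = MvPolynomial.C (MvPolynomial.coeff 0 V) := by
    conv_lhs => rw [← MvPolynomial.sum_homogeneousComponent V]
    rw [Finset.sum_eq_single 0]
    · exact MvPolynomial.homogeneousComponent_zero V
    · intro e _ he; exact key e he
    · intro hnot; simp at hnot
  rw [hV]
  conv_lhs => rw [hVC]
  ring

lemma aeval_scale {H : MvPolynomial (Fin 2) K} {d : ℕ} (hH : H.IsHomogeneous d)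
    (r f g : Polynomial K) :
    MvPolynomial.aeval ![r * f, r * g] H = r ^ d * MvPolynomial.aeval ![f, g] H := by
  conv_lhs => rw [← MvPolynomial.support_sum_monomial_coeff H]
  conv_rhs => rw [← MvPolynomial.support_sum_monomial_coeff H]
  rw [map_sum, map_sum, Finset.mul_sum]
  apply Finset.sum_congr rfl
  intro m hm
  have hd := homog_deg hH (MvPolynomial.mem_support_iff.mp hm)
  rw [MvPolynomial.aeval_monomial, MvPolynomial.aeval_monomial,
    Finsupp.prod_fintype _ _ (fun i => pow_zero _), Finsupp.prod_fintype _ _ (fun i => pow_zero _),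
    Fin.prod_univ_two, Fin.prod_univ_two]
  simp only [Matrix.cons_val_zero, Matrix.cons_val_one, Matrix.head_cons]
  rw [mul_pow, mul_pow, ← hd, pow_add]
  ring

/-- Reduction of the lifting condition: dividing out `X^(2i)` -/
lemma step1 {i : ℕ} (hi : 1 ≤ i) (c s : K) (h : c ^ 2 + s ^ 2 = 1)
    {P Q : MvPolynomial (Fin 2) K} (hP : P.IsHomogeneous i) (hQ : Q.IsHomogeneous i)
    {η : Polynomial K}
    (h1 : (X : Polynomial K) ^ (2 * i + 2) ∣
      MvPolynomial.aeval ![C c * X ^ 2 - C s * X ^ 3, C s * X ^ 2 + C c * X ^ 3] P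
        - η * (C c * (2 * X) - C s * (3 * X ^ 2)))
    (h2 : (X : Polynomial K) ^ (2 * i + 2) ∣
      MvPolynomial.aeval ![C c * X ^ 2 - C s * X ^ 3, C s * X ^ 2 + C c * X ^ 3] Q
        - η * (C s * (2 * X) + C c * (3 * X ^ 2))) :
    ∃ η₁ : Polynomial K,
      (X : Polynomial K) ^ 2 ∣
        MvPolynomial.aeval ![C c - C s * X, C s + C c * X] P - η₁ * (2 * C c - 3 * C s * X) ∧
      (X : Polynomial K) ^ 2 ∣
        MvPolynomial.aeval ![C c - C s * X, C s + C c * X] Q - η₁ * (2 * C s + 3 * C c * X) := by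
  set u : Polynomial K := C c - C s * X with hu
  set v : Polynomial K := C s + C c * X with hv
  set p : Polynomial K := MvPolynomial.aeval ![u, v] P with hp
  set q : Polynomial K := MvPolynomial.aeval ![u, v] Q with hq
  set w1 : Polynomial K := 2 * C c - 3 * C s * X with hw1
  set w2 : Polynomial K := 2 * C s + 3 * C c * X with hw2
  have hvec : (![C c * X ^ 2 - C s * X ^ 3, C s * X ^ 2 + C c * X ^ 3] : Fin 2 → Polynomial K)
      = ![X ^ 2 * u, X ^ 2 * v] := by
    funext j; fin_cases j <;> · simp only [Matrix.cons_val_zero, Matrix.cons_val_one,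
      Matrix.head_cons, hu, hv]; ring
  rw [hvec, aeval_scale hP, ← hp, ← pow_mul] at h1
  rw [hvec, aeval_scale hQ, ← hq, ← pow_mul] at h2
  have e1 : C c * (2 * X) - C s * (3 * X ^ 2) = X * w1 := by rw [hw1]; ring
  have e2 : C s * (2 * X) + C c * (3 * X ^ 2) = X * w2 := by rw [hw2]; ring
  rw [e1] at h1
  rw [e2] at h2
  have hC : (C c : Polynomial K) ^ 2 + C s ^ 2 = 1 := by
    rw [← map_pow, ← map_pow, ← map_add, h, map_one]
  -- combination is divisible
  have hcomb : (X : Polynomial K) ^ (2 * i + 2) ∣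
      C c * (X ^ (2 * i) * p - η * (X * w1)) + C s * (X ^ (2 * i) * q - η * (X * w2)) :=
    dvd_add (h1.mul_left _) (h2.mul_left _)
  have hkey : C c * (X ^ (2 * i) * p - η * (X * w1)) + C s * (X ^ (2 * i) * q - η * (X * w2))
      = X ^ (2 * i) * (C c * p + C s * q) - X * (2 * η) := by
    rw [hw1, hw2]
    linear_combination (-(2 : Polynomial K) * X * η) * hC
  have hXdvd : (X : Polynomial K) ^ (2 * i) ∣ X * (2 * η) := by
    have hd1 : (X : Polynomial K) ^ (2 * i) ∣
        C c * (X ^ (2 * i) * p - η * (X * w1)) + C s * (X ^ (2 * i) * q - η * (X * w2)) :=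
      (pow_dvd_pow X (by omega)).trans hcomb
    have := dvd_sub (Dvd.intro _ rfl : (X : Polynomial K) ^ (2 * i) ∣
        X ^ (2 * i) * (C c * p + C s * q)) (hkey ▸ hd1)
    simpa using this
  obtain ⟨j, hj⟩ : ∃ j, 2 * i = j + 1 := ⟨2 * i - 1, by omega⟩
  rw [hj, pow_succ] at hXdvd
  have hXdvd2 : (X : Polynomial K) ^ j ∣ 2 * η := by
    rw [mul_comm ((X : Polynomial K) ^ j) X] at hXdvd
    exact (mul_dvd_mul_iff_left (Polynomial.X_ne_zero (R := K))).mp hXdvd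
  have h2unit : IsUnit (2 : Polynomial K) := by
    rw [show (2 : Polynomial K) = Polynomial.C (2 : K) from
      (map_ofNat (Polynomial.C : K →+* Polynomial K) 2).symm]
    exact Polynomial.isUnit_C.mpr (isUnit_iff_ne_zero.mpr (by norm_num : (2:K) ≠ 0))
  have hXdvdη : (X : Polynomial K) ^ j ∣ η := h2unit.dvd_mul_left.mp hXdvd2
  obtain ⟨η₁, hη₁⟩ := hXdvdη
  refine ⟨η₁, ?_, ?_⟩
  · have : X ^ (2 * i) * p - η * (X * w1) = X ^ (2 * i) * (p - η₁ * w1) := by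
      rw [hη₁, hj, pow_succ]; ring
    rw [this, hj] at h1
    have hh : (X : Polynomial K) ^ (j + 1) * X ^ 2 ∣ X ^ (j + 1) * (p - η₁ * w1) := by
      rwa [pow_add] at h1
    exact (mul_dvd_mul_iff_left (pow_ne_zero _ (Polynomial.X_ne_zero (R := K)))).mp hh
  · have : X ^ (2 * i) * q - η * (X * w2) = X ^ (2 * i) * (q - η₁ * w2) := by
      rw [hη₁, hj, pow_succ]; ring
    rw [this, hj] at h2
    have hh : (X : Polynomial K) ^ (j + 1) * X ^ 2 ∣ X ^ (j + 1) * (q - η₁ * w2) := by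
      rwa [pow_add] at h2
    exact (mul_dvd_mul_iff_left (pow_ne_zero _ (Polynomial.X_ne_zero (R := K)))).mp hh

/-- elimination of the lift `η₁` -/
lemma step2 (c s : K) {P Q : MvPolynomial (Fin 2) K} {η₁ : Polynomial K}
    (h1 : (X : Polynomial K) ^ 2 ∣
      MvPolynomial.aeval ![C c - C s * X, C s + C c * X] P - η₁ * (2 * C c - 3 * C s * X))
    (h2 : (X : Polynomial K) ^ 2 ∣
      MvPolynomial.aeval ![C c - C s * X, C s + C c * X] Q - η₁ * (2 * C s + 3 * C c * X)) :
    (X : Polynomial K) ^ 2 ∣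
      X * MvPolynomial.aeval ![C c - C s * X, C s + C c * X]
        (MvPolynomial.X 0 * P + MvPolynomial.X 1 * Q)
      + 2 * MvPolynomial.aeval ![C c - C s * X, C s + C c * X]
        (MvPolynomial.X 1 * P - MvPolynomial.X 0 * Q) := by
  obtain ⟨a, ha⟩ := h1
  obtain ⟨b, hb⟩ := h2
  refine ⟨((2 * C s + 3 * C c * X) - C s * X ^ 2) * a + (C c * X ^ 2 - (2 * C c - 3 * C s * X)) * b
    + η₁ * (C c * (2 * C s + 3 * C c * X) - C s * (2 * C c - 3 * C s * X)), ?_⟩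
  simp only [map_add, map_sub, map_mul, MvPolynomial.aeval_X, Matrix.cons_val_zero,
    Matrix.cons_val_one, Matrix.head_cons]
  linear_combination (X * (C c - C s * X) + 2 * (C s + C c * X)) * ha
    + (X * (C s + C c * X) - 2 * (C c - C s * X)) * hb

lemma coeff_one_X_mul (g : Polynomial K) : (X * g).coeff 1 = g.coeff 0 := by
  simpa using Polynomial.coeff_X_mul g 0

lemma coeff_two_mul (g : Polynomial K) (n : ℕ) : ((2 : Polynomial K) * g).coeff n = 2 * g.coeff n := by
  rw [show (2 : Polynomial K) = Polynomial.C (2 : K) from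
    (map_ofNat (Polynomial.C : K →+* Polynomial K) 2).symm, Polynomial.coeff_C_mul]

/-- The central linear-algebra fact. -/
lemma main {i : ℕ} (hi : 1 ≤ i) (cc ss : Fin (i+1) → K)
    (hcs : ∀ k, cc k ^ 2 + ss k ^ 2 = 1)
    (hSKne : ∀ j k, j ≠ k → ss j * cc k - cc j * ss k ≠ 0)
    {P Q : MvPolynomial (Fin 2) K} (hP : P.IsHomogeneous i) (hQ : Q.IsHomogeneous i)
    (hstar : ∀ k, (X : Polynomial K) ^ 2 ∣
      X * MvPolynomial.aeval ![C (cc k) - C (ss k) * X, C (ss k) + C (cc k) * X]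
          (MvPolynomial.X 0 * P + MvPolynomial.X 1 * Q)
        + 2 * MvPolynomial.aeval ![C (cc k) - C (ss k) * X, C (ss k) + C (cc k) * X]
          (MvPolynomial.X 1 * P - MvPolynomial.X 0 * Q)) :
    P = 0 ∧ Q = 0 := by
  classical
  set F : MvPolynomial (Fin 2) K := MvPolynomial.X 1 * P - MvPolynomial.X 0 * Q with hFdef
  set G : MvPolynomial (Fin 2) K := MvPolynomial.X 0 * P + MvPolynomial.X 1 * Q with hGdef
  have hFhom : F.IsHomogeneous (i+1) := by
    have h1 : (MvPolynomial.X 1 * P).IsHomogeneous (1 + i) :=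
      (MvPolynomial.isHomogeneous_X _ _).mul hP
    have h2 : (MvPolynomial.X 0 * Q).IsHomogeneous (1 + i) :=
      (MvPolynomial.isHomogeneous_X _ _).mul hQ
    rw [Nat.add_comm] at h1 h2
    exact h1.sub h2
  have hGhom : G.IsHomogeneous (i+1) := by
    have h1 : (MvPolynomial.X 0 * P).IsHomogeneous (1 + i) :=
      (MvPolynomial.isHomogeneous_X _ _).mul hP
    have h2 : (MvPolynomial.X 1 * Q).IsHomogeneous (1 + i) :=
      (MvPolynomial.isHomogeneous_X _ _).mul hQ
    rw [Nat.add_comm] at h1 h2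
    exact h1.add h2
  have hΦeval0 : ∀ (k : Fin (i+1)) (H : MvPolynomial (Fin 2) K),
      (MvPolynomial.aeval ![C (cc k) - C (ss k) * X, C (ss k) + C (cc k) * X] H).coeff 0
        = MvPolynomial.eval ![cc k, ss k] H := by
    intro k H
    rw [Polynomial.coeff_zero_eq_eval_zero, eval_aeval]
    have hfn : (fun j => Polynomial.eval 0
        ((![C (cc k) - C (ss k) * X, C (ss k) + C (cc k) * X]) j)) = ![cc k, ss k] := by
      funext j; fin_cases j <;> simp
    rw [hfn]
  -- vanishing of F at the points
  have hFz : ∀ k, MvPolynomial.eval ![cc k, ss k] F = 0 := by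
    intro k
    have hd := hstar k
    set pG := MvPolynomial.aeval ![C (cc k) - C (ss k) * X, C (ss k) + C (cc k) * X] G with hpG
    set pF := MvPolynomial.aeval ![C (cc k) - C (ss k) * X, C (ss k) + C (cc k) * X] F with hpF
    have h1 : (X : Polynomial K) ∣ X * pG + 2 * pF :=
      (dvd_pow_self (X : Polynomial K) (two_ne_zero)).trans hd
    have h2 : (X : Polynomial K) ∣ X * pG := dvd_mul_right _ _
    have h3 : (X : Polynomial K) ∣ 2 * pF := by
      have := dvd_sub h1 h2
      simpa using this
    have h4 := Polynomial.X_dvd_iff.mp h3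
    rw [coeff_two_mul] at h4
    have h5 : pF.coeff 0 = 0 := by
      rcases mul_eq_zero.mp h4 with hx | hx
      · norm_num at hx
      · exact hx
    rw [hpF, hΦeval0] at h5
    exact h5
  -- the linear forms
  set Ll : Fin (i+1) → MvPolynomial (Fin 2) K := fun k => lin (ss k) (-(cc k)) with hLl
  set Pi : MvPolynomial (Fin 2) K := ∏ k, Ll k with hPidef
  have hLlnz : ∀ k, Ll k ≠ 0 := by
    intro k h0
    have h1 := congrArg (MvPolynomial.eval ![ss k, -(cc k)]) h0
    simp only [hLl, eval_lin, map_zero, Matrix.cons_val_zero, Matrix.cons_val_one,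
      Matrix.head_cons] at h1
    have : (1 : K) = 0 := by linear_combination h1 - hcs k
    exact one_ne_zero this
  have hPine : Pi ≠ 0 := Finset.prod_ne_zero_iff.mpr (fun k _ => hLlnz k)
  have hPihom : Pi.IsHomogeneous (i+1) := by
    have := MvPolynomial.IsHomogeneous.prod Finset.univ Ll (fun _ => 1)
      (fun k _ => lin_isHomogeneous _ _)
    simpa using this
  have hevalLl : ∀ j k, MvPolynomial.eval ![cc k, ss k] (Ll j) = ss j * cc k - cc j * ss k := by
    intro j k
    simp only [hLl, eval_lin, Matrix.cons_val_zero, Matrix.cons_val_one, Matrix.head_cons]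
    ring
  have factor : ∀ H : MvPolynomial (Fin 2) K, H.IsHomogeneous (i+1) →
      (∀ k, MvPolynomial.eval ![cc k, ss k] H = 0) →
      ∃ γ : K, H = MvPolynomial.C γ * Pi := by
    intro H hH hz
    apply eq_C_mul_of_dvd hH hPihom hPine
    rw [hPidef]
    apply prod_dvd
    · intro k _; exact prime_lin _ _ (hcs k)
    · intro k _; exact lin_dvd_of_eval_zero hH _ _ (hcs k) (hz k)
    · intro j _ k _ hjk hdvd
      obtain ⟨W, hW⟩ := hdvd
      have h1 := congrArg (MvPolynomial.eval ![cc j, ss j]) hW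
      rw [map_mul, hevalLl, hevalLl] at h1
      have h0 : ss j * cc j - cc j * ss j = 0 := by ring
      rw [h0, zero_mul] at h1
      exact hSKne k j (Ne.symm hjk) h1
  obtain ⟨α, hFα⟩ := factor F hFhom hFz
  -- second-order information
  have hΦLl : ∀ j k, MvPolynomial.aeval ![C (cc k) - C (ss k) * X, C (ss k) + C (cc k) * X] (Ll j)
      = C (ss j * cc k - cc j * ss k) - C (ss j * ss k + cc j * cc k) * X := by
    intro j k
    simp only [hLl, aeval_lin, Polynomial.algebraMap_apply, Algebra.algebraMap_self,
      RingHom.id_apply, Matrix.cons_val_zero, Matrix.cons_val_one, Matrix.head_cons]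
    simp only [map_sub, map_add, map_mul, map_neg]
    ring
  have hGval : ∀ k, MvPolynomial.eval ![cc k, ss k] G
      = 2 * α * ∏ j ∈ Finset.univ.erase k, (ss j * cc k - cc j * ss k) := by
    intro k
    have hd := hstar k
    set pG := MvPolynomial.aeval ![C (cc k) - C (ss k) * X, C (ss k) + C (cc k) * X] G with hpG
    set pF := MvPolynomial.aeval ![C (cc k) - C (ss k) * X, C (ss k) + C (cc k) * X] F with hpF
    have hc1 : (X * pG + 2 * pF).coeff 1 = 0 :=
      Polynomial.X_pow_dvd_iff.mp hd 1 (by norm_num)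
    rw [Polynomial.coeff_add, coeff_one_X_mul, coeff_two_mul] at hc1
    -- compute pF
    have hψF : pF = Polynomial.C α *
        ((C (ss k * cc k - cc k * ss k) - C (ss k * ss k + cc k * cc k) * X) *
          ∏ j ∈ Finset.univ.erase k,
            (C (ss j * cc k - cc j * ss k) - C (ss j * ss k + cc j * cc k) * X)) := by
      rw [hpF, hFα, map_mul, MvPolynomial.aeval_C, Polynomial.algebraMap_apply]
      simp only [Algebra.algebraMap_self, RingHom.id_apply]
      congr 1
      rw [hPidef, map_prod, ← Finset.mul_prod_erase _ _ (Finset.mem_univ k)]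
      rw [hΦLl]
      congr 1
      exact Finset.prod_congr rfl fun j _ => hΦLl j k
    have hzero : ss k * cc k - cc k * ss k = 0 := by ring
    have hone : ss k * ss k + cc k * cc k = 1 := by linear_combination hcs k
    have hcoe : pF.coeff 1 = - α * ∏ j ∈ Finset.univ.erase k, (ss j * cc k - cc j * ss k) := by
      rw [hψF, hzero, hone, map_zero, map_one, zero_sub, one_mul, Polynomial.coeff_C_mul,
        neg_mul, Polynomial.coeff_neg, coeff_one_X_mul, Polynomial.coeff_zero_eq_eval_zero,
        Polynomial.eval_prod]
      have : ∀ j ∈ Finset.univ.erase k,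
          Polynomial.eval 0 (C (ss j * cc k - cc j * ss k) - C (ss j * ss k + cc j * cc k) * X)
            = ss j * cc k - cc j * ss k := by
        intro j _; simp
      rw [Finset.prod_congr rfl this]
      ring
    have hgc : pG.coeff 0 = MvPolynomial.eval ![cc k, ss k] G := by rw [hpG, hΦeval0]
    rw [hgc, hcoe] at hc1
    linear_combination hc1
  -- the auxiliary polynomial N
  set N : MvPolynomial (Fin 2) K :=
    ∑ k, lin (cc k) (ss k) * ∏ j ∈ Finset.univ.erase k, Ll j with hNdef
  have hNhom : N.IsHomogeneous (i+1) := by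
    apply MvPolynomial.IsHomogeneous.sum
    intro k _
    have hcard : (Finset.univ.erase k).card = i := by
      rw [Finset.card_erase_of_mem (Finset.mem_univ k), Finset.card_univ, Fintype.card_fin]
      omega
    have h2 : (∏ j ∈ Finset.univ.erase k, Ll j).IsHomogeneous i := by
      have := MvPolynomial.IsHomogeneous.prod (Finset.univ.erase k) Ll (fun _ => 1)
        (fun j _ => lin_isHomogeneous _ _)
      rwa [Finset.sum_const, hcard, smul_eq_mul, mul_one] at this
    rw [mul_comm]
    exact h2.mul (lin_isHomogeneous _ _)
  have hNval : ∀ k, MvPolynomial.eval ![cc k, ss k] N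
      = ∏ j ∈ Finset.univ.erase k, (ss j * cc k - cc j * ss k) := by
    intro k
    rw [hNdef, map_sum, Finset.sum_eq_single k]
    · rw [map_mul, map_prod]
      have h1 : MvPolynomial.eval ![cc k, ss k] (lin (cc k) (ss k)) = 1 := by
        rw [eval_lin]
        simp only [Matrix.cons_val_zero, Matrix.cons_val_one, Matrix.head_cons]
        linear_combination hcs k
      rw [h1, one_mul]
      exact Finset.prod_congr rfl fun j _ => hevalLl j k
    · intro m _ hmk
      rw [map_mul, map_prod]
      apply mul_eq_zero_of_right
      apply Finset.prod_eq_zero (Finset.mem_erase.mpr ⟨Ne.symm hmk, Finset.mem_univ k⟩)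
      rw [hevalLl]; ring
    · intro hk; exact absurd (Finset.mem_univ k) hk
  have hH2z : ∀ k, MvPolynomial.eval ![cc k, ss k] (G - MvPolynomial.C (2*α) * N) = 0 := by
    intro k
    rw [map_sub, map_mul, MvPolynomial.eval_C, hGval, hNval]
    ring
  have hH2hom : (G - MvPolynomial.C (2*α) * N).IsHomogeneous (i+1) :=
    hGhom.sub (hNhom.C_mul _)
  obtain ⟨β, hGβ⟩ := factor _ hH2hom hH2z
  -- the adjoint-root endgame
  set A : Type _ := AdjoinRoot ((X : Polynomial K) ^ 2 + 1) with hA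
  set ι : A := AdjoinRoot.root _ with hιdef
  have hι2 : ι ^ 2 = -1 := by
    have h0 := AdjoinRoot.eval₂_root ((X : Polynomial K) ^ 2 + 1)
    simp only [Polynomial.eval₂_add, Polynomial.eval₂_pow, Polynomial.eval₂_X,
      Polynomial.eval₂_one] at h0
    linear_combination h0
  set ae : K →+* A := algebraMap K A with haedef
  set ψ : MvPolynomial (Fin 2) K →ₐ[K] Polynomial A :=
    MvPolynomial.aeval ![(X : Polynomial A), Polynomial.C ι * X] with hψdef
  have hψlin : ∀ a b : K, ψ (lin a b) = Polynomial.C (ae a + ι * ae b) * X := by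
    intro a b
    rw [hψdef, aeval_lin]
    simp only [Matrix.cons_val_zero, Matrix.cons_val_one, Matrix.head_cons,
      Polynomial.algebraMap_apply, Algebra.algebraMap_self, RingHom.id_apply, haedef,
      map_add, map_mul]
    ring
  have hψLl : ∀ k, ψ (Ll k) = Polynomial.C (ae (ss k) - ι * ae (cc k)) * X := by
    intro k
    rw [hLl]
    rw [hψlin]
    simp only [map_neg]
    ring_nf
    exact mul_comm _ _
  have hψPi : ψ Pi = Polynomial.C (∏ k, (ae (ss k) - ι * ae (cc k))) * X ^ (i+1) := by
    rw [hPidef, map_prod]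
    rw [Finset.prod_congr rfl fun k _ => hψLl k, Finset.prod_mul_distrib, Finset.prod_const,
      Finset.card_univ, Fintype.card_fin, ← map_prod]
  have hψN : ψ N = Polynomial.C (∑ k, (ae (cc k) + ι * ae (ss k)) *
      ∏ j ∈ Finset.univ.erase k, (ae (ss j) - ι * ae (cc j))) * X ^ (i+1) := by
    rw [hNdef, map_sum]
    have hterm : ∀ k, ψ (lin (cc k) (ss k) * ∏ j ∈ Finset.univ.erase k, Ll j)
        = Polynomial.C ((ae (cc k) + ι * ae (ss k)) *
            ∏ j ∈ Finset.univ.erase k, (ae (ss j) - ι * ae (cc j))) * X ^ (i+1) := by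
      intro k
      have hcard : (Finset.univ.erase k).card = i := by
        rw [Finset.card_erase_of_mem (Finset.mem_univ k), Finset.card_univ, Fintype.card_fin]
        omega
      rw [map_mul, hψlin, map_prod, Finset.prod_congr rfl fun j _ => hψLl j,
        Finset.prod_mul_distrib, Finset.prod_const, hcard, ← map_prod, map_mul]
      ring
    rw [Finset.sum_congr rfl fun k _ => hterm k, ← Finset.sum_mul, ← map_sum]
  have hψzero : ψ (MvPolynomial.X 0 * G + MvPolynomial.X 1 * F) = 0 := by
    have hPQ : MvPolynomial.X 0 * G + MvPolynomial.X 1 * F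
        = (MvPolynomial.X 0 * MvPolynomial.X 0 + MvPolynomial.X 1 * MvPolynomial.X 1) * P := by
      rw [hFdef, hGdef]; ring
    rw [hPQ, map_mul]
    have hXX : ψ (MvPolynomial.X 0 * MvPolynomial.X 0 + MvPolynomial.X 1 * MvPolynomial.X 1)
        = 0 := by
      rw [hψdef]
      simp only [map_add, map_mul, MvPolynomial.aeval_X, Matrix.cons_val_zero,
        Matrix.cons_val_one, Matrix.head_cons]
      have hCι : (Polynomial.C ι : Polynomial A) ^ 2 = -1 := by
        rw [← map_pow, hι2, map_neg, map_one]
      linear_combination ((X : Polynomial A) ^ 2) * hCι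
    rw [hXX, zero_mul]
  -- expand and extract coefficient
  have hGeq : G = MvPolynomial.C (2*α) * N + MvPolynomial.C β * Pi := by
    linear_combination hGβ
  have hscalar : 2 * ae α * (∑ k, (ae (cc k) + ι * ae (ss k)) *
      ∏ j ∈ Finset.univ.erase k, (ae (ss j) - ι * ae (cc j)))
      + (ae β + ι * ae α) * ∏ k, (ae (ss k) - ι * ae (cc k)) = 0 := by
    have hexp : ψ (MvPolynomial.X 0 * G + MvPolynomial.X 1 * F)
        = Polynomial.C (2 * ae α * (∑ k, (ae (cc k) + ι * ae (ss k)) *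
            ∏ j ∈ Finset.univ.erase k, (ae (ss j) - ι * ae (cc j)))
          + (ae β + ι * ae α) * ∏ k, (ae (ss k) - ι * ae (cc k))) * X ^ (i+2) := by
      have hψX0 : ψ (MvPolynomial.X 0) = (X : Polynomial A) := by
        rw [hψdef, MvPolynomial.aeval_X]; simp
      have hψX1 : ψ (MvPolynomial.X 1) = Polynomial.C ι * X := by
        rw [hψdef, MvPolynomial.aeval_X]; simp
      have hψC : ∀ γ : K, ψ (MvPolynomial.C γ) = Polynomial.C (ae γ) := by
        intro γ
        rw [hψdef, MvPolynomial.aeval_C, Polynomial.algebraMap_apply]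
      rw [hGeq, hFα]
      rw [map_add (f := ψ), map_mul (f := ψ) (MvPolynomial.X 0) _,
        map_mul (f := ψ) (MvPolynomial.X 1) _,
        map_add (f := ψ), map_mul (f := ψ) (MvPolynomial.C (2*α)) N,
        map_mul (f := ψ) (MvPolynomial.C β) Pi,
        map_mul (f := ψ) (MvPolynomial.C α) Pi,
        hψX0, hψX1, hψC, hψC, hψC, hψPi, hψN]
      rw [show ae (2*α) = 2 * ae α from by rw [map_mul, map_ofNat]]
      simp only [map_add, map_mul]
      ring
    rw [hψzero] at hexp
    have h0 : ((Polynomial.C (2 * ae α * (∑ k, (ae (cc k) + ι * ae (ss k)) *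
        ∏ j ∈ Finset.univ.erase k, (ae (ss j) - ι * ae (cc j)))
        + (ae β + ι * ae α) * ∏ k, (ae (ss k) - ι * ae (cc k)))) * X ^ (i+2)).coeff (i+2)
        = 0 := by rw [← hexp]; simp
    rwa [Polynomial.coeff_C_mul, Polynomial.coeff_X_pow, if_pos rfl, mul_one] at h0
  -- simplify the scalar relation
  have hfe : ∀ k, ae (ss k) - ι * ae (cc k) = (-ι) * (ae (cc k) + ι * ae (ss k)) := by
    intro k
    linear_combination (ae (ss k)) * hι2
  have hprod : (∏ k, (ae (ss k) - ι * ae (cc k)))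
      = (-ι) ^ (i+1) * ∏ k, (ae (cc k) + ι * ae (ss k)) := by
    rw [Finset.prod_congr rfl fun k _ => hfe k, Finset.prod_mul_distrib, Finset.prod_const,
      Finset.card_univ, Fintype.card_fin]
  have hsum : (∑ k, (ae (cc k) + ι * ae (ss k)) *
      ∏ j ∈ Finset.univ.erase k, (ae (ss j) - ι * ae (cc j)))
      = (i+1 : ℕ) * ((-ι) ^ i * ∏ k, (ae (cc k) + ι * ae (ss k))) := by
    have hterm : ∀ k : Fin (i+1), (ae (cc k) + ι * ae (ss k)) *
        ∏ j ∈ Finset.univ.erase k, (ae (ss j) - ι * ae (cc j))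
        = (-ι) ^ i * ∏ j, (ae (cc j) + ι * ae (ss j)) := by
      intro k
      have hcard : (Finset.univ.erase k).card = i := by
        rw [Finset.card_erase_of_mem (Finset.mem_univ k), Finset.card_univ, Fintype.card_fin]
        omega
      rw [Finset.prod_congr rfl fun j _ => hfe j, Finset.prod_mul_distrib, Finset.prod_const,
        hcard, ← Finset.mul_prod_erase Finset.univ (fun j => ae (cc j) + ι * ae (ss j))
          (Finset.mem_univ k)]
      ring
    rw [Finset.sum_congr rfl fun k _ => hterm k, Finset.sum_const, Finset.card_univ,
      Fintype.card_fin, nsmul_eq_mul]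
  set E : A := ∏ k, (ae (cc k) + ι * ae (ss k)) with hEdef
  have hEunit : E * ∏ k, (ae (cc k) - ι * ae (ss k)) = 1 := by
    rw [hEdef, ← Finset.prod_mul_distrib]
    apply Finset.prod_eq_one
    intro k _
    have h2 : ae (cc k) ^ 2 + ae (ss k) ^ 2 = 1 := by
      rw [← map_pow, ← map_pow, ← map_add, hcs, map_one]
    linear_combination h2 - (ae (ss k))^2 * hι2
  have hw2 : (-ι) ^ i * E * (ae α * (2*(i:A)+3) - ι * ae β) = 0 := by
    rw [hprod, hsum, hEdef] at hscalar
    rw [hEdef]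
    push_cast at hscalar ⊢
    linear_combination hscalar + ((-ι))^i * (∏ k, (ae (cc k) + ι * ae (ss k))) * (ae α) * hι2
  have hmain0 : ae α * (2*(i:A)+3) - ι * ae β = 0 := by
    have hcalc : ae α * (2*(i:A)+3) - ι * ae β
        = (ι^i * (∏ k, (ae (cc k) - ι * ae (ss k))))
          * ((-ι) ^ i * E * (ae α * (2*(i:A)+3) - ι * ae β)) := by
      have hu : (-ι) * ι = 1 := by linear_combination -hι2
      calc ae α * (2*(i:A)+3) - ι * ae β
          = (((-ι) * ι) ^ i * (E * ∏ k, (ae (cc k) - ι * ae (ss k))))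
            * (ae α * (2*(i:A)+3) - ι * ae β) := by rw [hu, hEunit]; ring
        _ = (ι^i * (∏ k, (ae (cc k) - ι * ae (ss k))))
            * ((-ι) ^ i * E * (ae α * (2*(i:A)+3) - ι * ae β)) := by
            rw [mul_pow]; ring
    rw [hcalc, hw2, mul_zero]
  have hae23 : ae (2*(i:K)+3) = 2*(i:A)+3 := by
    simp only [map_add, map_mul, map_ofNat, map_natCast]
  have hmain : ae α * ae (2*(i:K)+3) - ι * ae β = 0 := by
    rw [hae23]; exact hmain0
  -- descend to K
  have hαβ : α = 0 ∧ β = 0 := by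
    have hmk : AdjoinRoot.mk ((X : Polynomial K) ^ 2 + 1)
        (Polynomial.C α * Polynomial.C (2*(i:K)+3) - X * Polynomial.C β) = 0 := by
      rw [map_sub, map_mul, map_mul, AdjoinRoot.mk_C, AdjoinRoot.mk_C, AdjoinRoot.mk_C,
        AdjoinRoot.mk_X]
      rw [haedef, AdjoinRoot.algebraMap_eq] at hmain
      rw [hιdef] at hmain
      exact hmain
    have hdvd := (AdjoinRoot.mk_eq_zero).mp hmk
    have hdeg : (Polynomial.C α * Polynomial.C (2*(i:K)+3) - X * Polynomial.C β).degree
        < ((X : Polynomial K) ^ 2 + 1).degree := by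
      have hdeg2 : ((X : Polynomial K) ^ 2 + 1).degree = 2 := by
        rw [show ((X : Polynomial K) ^ 2 + 1) = X^2 + Polynomial.C 1 by rw [map_one]]
        exact Polynomial.degree_X_pow_add_C (by norm_num) 1
      rw [hdeg2]
      apply lt_of_le_of_lt (Polynomial.degree_sub_le _ _)
      rw [max_lt_iff]
      constructor
      · exact lt_of_le_of_lt ((Polynomial.degree_mul_le _ _).trans
          (add_le_add Polynomial.degree_C_le Polynomial.degree_C_le)) (by norm_num)
      · apply lt_of_le_of_lt (Polynomial.degree_mul_le _ _)
        apply lt_of_le_of_lt (add_le_add Polynomial.degree_X_le Polynomial.degree_C_le)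
        norm_num
    have hzero := Polynomial.eq_zero_of_dvd_of_degree_lt hdvd hdeg
    constructor
    · have h0 := congrArg (fun p : Polynomial K => p.coeff 0) hzero
      simp only [Polynomial.coeff_sub, Polynomial.coeff_zero, Polynomial.mul_coeff_zero,
        Polynomial.coeff_C_zero, Polynomial.coeff_X_zero, zero_mul, sub_zero] at h0
      have hne : (2*(i:K)+3) ≠ 0 := by
        have hh : ((2*i+3 : ℕ) : K) ≠ 0 := Nat.cast_ne_zero.mpr (by omega)
        intro hc
        apply hh
        push_cast
        linear_combination hc
      exact (mul_eq_zero.mp h0).resolve_right hne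
    · have h1 := congrArg (fun p : Polynomial K => p.coeff 1) hzero
      simp only [Polynomial.coeff_sub, Polynomial.coeff_zero] at h1
      rw [← Polynomial.C_mul, Polynomial.coeff_C, if_neg (by norm_num), coeff_one_X_mul,
        Polynomial.coeff_C_zero, zero_sub, neg_eq_zero] at h1
      exact h1
  obtain ⟨hα0, hβ0⟩ := hαβ
  have hF0 : F = 0 := by rw [hFα, hα0, map_zero, zero_mul]
  have hG0 : G = 0 := by rw [hGeq, hα0, hβ0]; simp
  have hXXne : (MvPolynomial.X 0 * MvPolynomial.X 0 + MvPolynomial.X 1 * MvPolynomial.X 1 :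
      MvPolynomial (Fin 2) K) ≠ 0 := by
    intro h0
    have := congrArg (MvPolynomial.eval ![(1:K), 0]) h0
    simp at this
  constructor
  · have hkey : (MvPolynomial.X 0 * MvPolynomial.X 0 + MvPolynomial.X 1 * MvPolynomial.X 1) * P
        = MvPolynomial.X 0 * G + MvPolynomial.X 1 * F := by rw [hFdef, hGdef]; ring
    rw [hF0, hG0, mul_zero, mul_zero, add_zero] at hkey
    exact (mul_eq_zero.mp hkey).resolve_left hXXne
  · have hkey : (MvPolynomial.X 0 * MvPolynomial.X 0 + MvPolynomial.X 1 * MvPolynomial.X 1) * Q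
        = MvPolynomial.X 1 * G - MvPolynomial.X 0 * F := by rw [hFdef, hGdef]; ring
    rw [hF0, hG0, mul_zero, mul_zero, sub_zero] at hkey
    exact (mul_eq_zero.mp hkey).resolve_left hXXne

end MulticuspAux

/-- Injectivity of the `i`-th reduced Kodaira–Spencer–Mather map of the multicusp
`c_(θ₀,…,θ_i)` for `i ≥ 1`: if `ξ ∈ V_i` is `i`-liftably tangent to every branch `c_{θ_k}`,
then `ξ = 0`. -/


theorem multicusp_KSM_injective (K : Type*) [RCLike K] (i : ℕ) (hi : 1 ≤ i)
    (θ : Fin (i + 1) → ℝ) (hθ : Admissible θ)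
    (ξ : MvPolynomial (Fin 2) K × MvPolynomial (Fin 2) K) (hξ : ξ ∈ Vsp K i)
    (h : ∀ k, LiftTang K i (θ k) ξ) : ξ = 0 := by
  obtain ⟨P, Q⟩ := ξ
  have hP : P.IsHomogeneous i := (MvPolynomial.mem_homogeneousSubmodule _ _).mp hξ.1
  have hQ : Q.IsHomogeneous i := (MvPolynomial.mem_homogeneousSubmodule _ _).mp hξ.2
  have hcs : ∀ k : Fin (i+1),
      ((Real.cos (θ k) : K)) ^ 2 + ((Real.sin (θ k) : K)) ^ 2 = 1 := by
    intro k
    rw [← RCLike.ofReal_pow, ← RCLike.ofReal_pow, ← RCLike.ofReal_add,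
      Real.cos_sq_add_sin_sq, RCLike.ofReal_one]
  have hSKne : ∀ j k : Fin (i+1), j ≠ k →
      ((Real.sin (θ j) : K)) * ((Real.cos (θ k) : K))
        - ((Real.cos (θ j) : K)) * ((Real.sin (θ k) : K)) ≠ 0 := by
    intro j k hjk
    have hsin : Real.sin (θ j - θ k) ≠ 0 := by
      intro h0
      obtain ⟨n, hn⟩ := Real.sin_eq_zero_iff.mp h0
      exact hθ j k hjk n hn.symm
    have hcast : ((Real.sin (θ j) : K)) * ((Real.cos (θ k) : K))
        - ((Real.cos (θ j) : K)) * ((Real.sin (θ k) : K))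
        = ((Real.sin (θ j - θ k) : K)) := by
      rw [Real.sin_sub]
      push_cast
      ring
    rw [hcast]
    exact RCLike.ofReal_ne_zero.mpr hsin
  have hstar : ∀ k : Fin (i+1), (X : Polynomial K) ^ 2 ∣
      X * MvPolynomial.aeval
          ![C ((Real.cos (θ k) : K)) - C ((Real.sin (θ k) : K)) * X,
            C ((Real.sin (θ k) : K)) + C ((Real.cos (θ k) : K)) * X]
          (MvPolynomial.X 0 * P + MvPolynomial.X 1 * Q)
        + 2 * MvPolynomial.aeval
          ![C ((Real.cos (θ k) : K)) - C ((Real.sin (θ k) : K)) * X,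
            C ((Real.sin (θ k) : K)) + C ((Real.cos (θ k) : K)) * X]
          (MvPolynomial.X 1 * P - MvPolynomial.X 0 * Q) := by
    intro k
    have hk := h k
    unfold LiftTang at hk
    obtain ⟨η, h1, h2⟩ := hk
    simp only [cuspEval, cusp1, cusp2, dcusp1, dcusp2] at h1 h2
    obtain ⟨η₁, hh1, hh2⟩ := MulticuspAux.step1 hi _ _ (hcs k) hP hQ h1 h2
    exact MulticuspAux.step2 _ _ hh1 hh2
  have hPQ := MulticuspAux.main hi (fun k => ((Real.cos (θ k) : K)))
    (fun k => ((Real.sin (θ k) : K))) hcs hSKne hP hQ hstar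
  exact Prod.mk_eq_zero.mpr hPQ
end

section
/- Let i ≥ 1 be an integer and let θ₀, …, θ_i be an admissible family of real angles (θ_j − θ_k ∉ πℤ for all j ≠ k). Then for every family of pairs of polynomials (A_k, B_k) ∈ K[x] × K[x], k = 0, …, i, such that x^{2i} divides each A_k and each B_k, there exist a pair ξ = (P, Q) of homogeneous degree-i polynomials in K[X, Y] and polynomials η₀, …, η_i ∈ K[x] such that for every k ∈ {0, …, i}, x^{2i+2} divides both A_k(x) − P(c_{θ_k}(x)) − η_k(x)·(2x cos θ_k − 3x² sin θ_k) and B_k(x) − Q(c_{θ_k}(x)) − η_k(x)·(2x sin θ_k + 3x² cos θ_k) in K[x]. (Equivalently, the i-th reduced Kodaira–Spencer–Mather map ᵢω̄ of the multicusp c_{(θ₀, …, θ_i)} is surjective; combined with injectivity this is the paper's Corollary 1 that ᵢω̄c_{(θ₀,…,θ_i)} is bijective.) -/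
open Polynomial

namespace KSMproof
open Finset

variable (K : Type*) [RCLike K] {i : ℕ} (θ : Fin (i+1) → ℝ)

noncomputable def sn (j m : Fin (i+1)) : K := ((Real.sin (θ j - θ m) : ℝ) : K)
noncomputable def cn (j m : Fin (i+1)) : K := ((Real.cos (θ j - θ m) : ℝ) : K)
noncomputable def sa (m : Fin (i+1)) : K := ((Real.sin (θ m) : ℝ) : K)
noncomputable def ca (m : Fin (i+1)) : K := ((Real.cos (θ m) : ℝ) : K)

lemma sn_self (m) : sn K θ m m = 0 := by simp [sn]
lemma cn_self (m) : cn K θ m m = 1 := by simp [cn]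
lemma sn_eq (j m) : sn K θ j m = sa K θ j * ca K θ m - ca K θ j * sa K θ m := by
  unfold sn sa ca; norm_cast; exact Real.sin_sub _ _
lemma sn_anti (j m) : sn K θ j m = - sn K θ m j := by
  unfold sn; norm_cast; rw [show θ j - θ m = -(θ m - θ j) by ring, Real.sin_neg]
lemma ca_comb (j m) : ca K θ j = cn K θ j m * ca K θ m - sn K θ j m * sa K θ m := by
  unfold cn ca sa sn; norm_cast; rw [← Real.cos_add, sub_add_cancel]
lemma sa_comb (j m) : sa K θ j = sn K θ j m * ca K θ m + cn K θ j m * sa K θ m := by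
  unfold cn ca sa sn; norm_cast; rw [← Real.sin_add, sub_add_cancel]
lemma sq_one (m) : sa K θ m ^ 2 + ca K θ m ^ 2 = 1 := by
  unfold sa ca; norm_cast; exact Real.sin_sq_add_cos_sq _
lemma sn_ne (hθ : Admissible θ) {j m : Fin (i+1)} (h : j ≠ m) : sn K θ j m ≠ 0 := by
  unfold sn
  rw [ne_eq, RCLike.ofReal_eq_zero, Real.sin_eq_zero_iff]
  rintro ⟨n, hn⟩
  exact hθ j m h n hn.symm

/-- The rotated linear form `D_j = sin θ_j · X₀ - cos θ_j · X₁`. -/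
noncomputable def Dform (j : Fin (i+1)) : MvPolynomial (Fin 2) K :=
  MvPolynomial.C (sa K θ j) * MvPolynomial.X 0 - MvPolynomial.C (ca K θ j) * MvPolynomial.X 1

lemma Dform_homog (j) : (Dform K θ j).IsHomogeneous 1 := by
  apply MvPolynomial.IsHomogeneous.sub <;> exact MvPolynomial.isHomogeneous_C_mul_X _ _

lemma cuspEval_mul (t : ℝ) (P Q : MvPolynomial (Fin 2) K) :
    cuspEval K t (P * Q) = cuspEval K t P * cuspEval K t Q := map_mul _ _ _

lemma cuspEval_C_mul (t : ℝ) (a : K) (P : MvPolynomial (Fin 2) K) :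
    cuspEval K t (MvPolynomial.C a * P) = C a * cuspEval K t P := by
  rw [cuspEval_mul]; congr 1; simp [cuspEval, Polynomial.algebraMap_eq]

lemma cuspEval_zero (t : ℝ) : cuspEval K t 0 = 0 := map_zero (MvPolynomial.aeval _)

lemma cuspEval_neg (t : ℝ) (P : MvPolynomial (Fin 2) K) :
    cuspEval K t (-P) = - cuspEval K t P := map_neg (MvPolynomial.aeval _) _

lemma cuspEval_add (t : ℝ) (P Q : MvPolynomial (Fin 2) K) :
    cuspEval K t (P + Q) = cuspEval K t P + cuspEval K t Q := map_add (MvPolynomial.aeval _) _ _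

lemma cuspEval_prod {α : Type*} (t : ℝ) (s : Finset α) (f : α → MvPolynomial (Fin 2) K) :
    cuspEval K t (∏ j ∈ s, f j) = ∏ j ∈ s, cuspEval K t (f j) := map_prod _ _ _

lemma cuspEval_Dform (j m : Fin (i+1)) :
    cuspEval K (θ m) (Dform K θ j) = C (sn K θ j m) * X ^ 2 + C (- cn K θ j m) * X ^ 3 := by
  have h1 := sn_eq K θ j m
  have h2 : cn K θ j m = ca K θ j * ca K θ m + sa K θ j * sa K θ m := by
    unfold cn ca sa; norm_cast; exact Real.cos_sub _ _
  rw [h1, h2]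
  simp only [cuspEval, Dform, map_sub, map_mul, MvPolynomial.aeval_C, MvPolynomial.aeval_X,
    Matrix.cons_val_zero, Matrix.cons_val_one, Matrix.head_cons]
  simp only [cusp1, cusp2, ca, sa, Polynomial.algebraMap_eq, map_sub, map_mul, map_add, map_neg, Polynomial.C_mul, Polynomial.C_sub, Polynomial.C_add, Polynomial.C_neg]
  ring

lemma jet_prod {α : Type*} [DecidableEq α] (s : Finset α) (a b : α → K) :
    ∃ (u : K) (r : Polynomial K), ∏ j ∈ s, (C (a j) * X ^ 2 + C (b j) * X ^ 3)
      = C (∏ j ∈ s, a j) * (X : Polynomial K) ^ (2 * s.card) + C u * X ^ (2 * s.card + 1)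
        + X ^ (2 * s.card + 2) * r := by
  classical
  induction s using Finset.induction_on with
  | empty => exact ⟨0, 0, by simp⟩
  | @insert j s hj ih =>
    obtain ⟨u, r, hur⟩ := ih
    refine ⟨a j * u + b j * ∏ l ∈ s, a l,
      C (a j) * r + C (b j * u) + C (b j) * X * r, ?_⟩
    rw [Finset.prod_insert hj, hur, Finset.prod_insert hj, Finset.card_insert_of_notMem hj]
    simp only [Polynomial.C_mul, Polynomial.C_add]
    ring

lemma jet_reg (s : Finset (Fin (i+1))) (m : Fin (i+1)) :
    ∃ (u : K) (r : Polynomial K), cuspEval K (θ m) (∏ j ∈ s, Dform K θ j)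
      = C (∏ j ∈ s, sn K θ j m) * (X : Polynomial K) ^ (2 * s.card) + C u * X ^ (2 * s.card + 1)
        + X ^ (2 * s.card + 2) * r := by
  rw [cuspEval_prod]
  simp_rw [cuspEval_Dform]
  exact jet_prod K s _ _

lemma jet_cubic (s : Finset (Fin (i+1))) (m : Fin (i+1)) (hm : m ∈ s) :
    ∃ r : Polynomial K, cuspEval K (θ m) (∏ j ∈ s, Dform K θ j)
      = C (- ∏ j ∈ s.erase m, sn K θ j m) * (X : Polynomial K) ^ (2 * s.card + 1)
        + X ^ (2 * s.card + 2) * r := by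
  obtain ⟨c, hc⟩ : ∃ c, s.card = c + 1 :=
    ⟨s.card - 1, (Nat.succ_pred_eq_of_pos (Finset.card_pos.mpr ⟨m, hm⟩)).symm⟩
  have hce : (s.erase m).card = c := by rw [Finset.card_erase_of_mem hm, hc]; omega
  obtain ⟨u, r, hur⟩ := jet_reg K θ (s.erase m) m
  rw [← Finset.mul_prod_erase s _ hm, cuspEval_mul, cuspEval_Dform, sn_self, cn_self, hur, hce]
  refine ⟨- C u - X * r, ?_⟩
  rw [hc]
  simp only [Polynomial.C_neg, Polynomial.C_0, map_one]
  ring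


/-- The set of branchwise data realizable by a homogeneous pair `(P,Q)` and
branchwise tangent corrections `η`. -/
noncomputable def Sol : Submodule K (Fin (i+1) → Polynomial K × Polynomial K) where
  carrier := { AB | ∃ P Q : MvPolynomial (Fin 2) K, ∃ η : Fin (i+1) → Polynomial K,
    P.IsHomogeneous i ∧ Q.IsHomogeneous i ∧
    ∀ k, (X : Polynomial K) ^ (2*i+2) ∣ (AB k).1 - cuspEval K (θ k) P - η k * dcusp1 K (θ k) ∧
         (X : Polynomial K) ^ (2*i+2) ∣ (AB k).2 - cuspEval K (θ k) Q - η k * dcusp2 K (θ k) }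
  add_mem' := by
    rintro x y ⟨P, Q, η, hP, hQ, h⟩ ⟨P', Q', η', hP', hQ', h'⟩
    refine ⟨P + P', Q + Q', η + η', hP.add hP', hQ.add hQ', fun k => ?_⟩
    obtain ⟨h1, h2⟩ := h k; obtain ⟨h1', h2'⟩ := h' k
    constructor
    · have := dvd_add h1 h1'
      convert this using 1
      simp only [cuspEval_add, Pi.add_apply, Prod.fst_add]
      ring
    · have := dvd_add h2 h2'
      convert this using 1
      simp only [cuspEval_add, Pi.add_apply, Prod.snd_add]
      ring
  zero_mem' := by
    refine ⟨0, 0, 0, MvPolynomial.isHomogeneous_zero _ _ _, MvPolynomial.isHomogeneous_zero _ _ _,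
      fun k => ?_⟩
    simp [cuspEval_zero]
  smul_mem' := by
    rintro c x ⟨P, Q, η, hP, hQ, h⟩
    refine ⟨MvPolynomial.C c * P, MvPolynomial.C c * Q, fun k => C c * η k,
      hP.C_mul _, hQ.C_mul _, fun k => ?_⟩
    obtain ⟨h1, h2⟩ := h k
    constructor
    · have := h1.mul_left (C c)
      convert this using 1
      simp only [cuspEval_C_mul, Pi.smul_apply, Prod.smul_fst, Polynomial.smul_eq_C_mul]
      ring
    · have := h2.mul_left (C c)
      convert this using 1
      simp only [cuspEval_C_mul, Pi.smul_apply, Prod.smul_snd, Polynomial.smul_eq_C_mul]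
      ring

lemma mem_sol_of_dvd {g : Fin (i+1) → Polynomial K × Polynomial K}
    (h : ∀ b, (X : Polynomial K) ^ (2*i+2) ∣ (g b).1 ∧ (X : Polynomial K) ^ (2*i+2) ∣ (g b).2) :
    g ∈ Sol K θ := by
  refine ⟨0, 0, 0, MvPolynomial.isHomogeneous_zero _ _ _, MvPolynomial.isHomogeneous_zero _ _ _,
    fun k => ?_⟩
  simpa [cuspEval_zero] using h k

noncomputable def famPQ (P Q : MvPolynomial (Fin 2) K) : Fin (i+1) → Polynomial K × Polynomial K :=
  fun m => (cuspEval K (θ m) P, cuspEval K (θ m) Q)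

lemma famPQ_mem {P Q : MvPolynomial (Fin 2) K}
    (hP : P.IsHomogeneous i) (hQ : Q.IsHomogeneous i) : famPQ K θ P Q ∈ Sol K θ := by
  exact ⟨P, Q, 0, hP, hQ, fun k => by simp [famPQ]⟩

noncomputable def R1 (k : Fin (i+1)) : Fin (i+1) → Polynomial K × Polynomial K :=
  Pi.single k (C (- sa K θ k) * X ^ (2*i), C (ca K θ k) * X ^ (2*i))
noncomputable def R2 (k : Fin (i+1)) : Fin (i+1) → Polynomial K × Polynomial K :=
  Pi.single k (C (ca K θ k) * X ^ (2*i), C (sa K θ k) * X ^ (2*i))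
noncomputable def R3 (k : Fin (i+1)) : Fin (i+1) → Polynomial K × Polynomial K :=
  Pi.single k (C (- sa K θ k) * X ^ (2*i+1), C (ca K θ k) * X ^ (2*i+1))
noncomputable def R4 (k : Fin (i+1)) : Fin (i+1) → Polynomial K × Polynomial K :=
  Pi.single k (C (ca K θ k) * X ^ (2*i+1), C (sa K θ k) * X ^ (2*i+1))

lemma smul_cancel {c : K} (hc : c ≠ 0) {x : Fin (i+1) → Polynomial K × Polynomial K}
    (h : c • x ∈ Sol K θ) : x ∈ Sol K θ := by
  have := (Sol K θ).smul_mem c⁻¹ h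
  rwa [smul_smul, inv_mul_cancel₀ hc, one_smul] at this

lemma R4_mem (m : Fin (i+1)) : R4 K θ m ∈ Sol K θ := by
  apply smul_cancel K θ (two_ne_zero (α := K))
  refine ⟨0, 0, Pi.single m ((X : Polynomial K) ^ (2*i)),
    MvPolynomial.isHomogeneous_zero _ _ _, MvPolynomial.isHomogeneous_zero _ _ _, fun k => ?_⟩
  rcases eq_or_ne k m with rfl | hk
  · constructor
    · refine ⟨C (sa K θ k) * 3, ?_⟩
      simp only [R4, cuspEval_zero, Pi.smul_apply, Pi.single_eq_same, Prod.smul_fst,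
        Polynomial.smul_eq_C_mul, dcusp1, map_ofNat, ca, sa]
      ring
    · refine ⟨- C (ca K θ k) * 3, ?_⟩
      simp only [R4, cuspEval_zero, Pi.smul_apply, Pi.single_eq_same, Prod.smul_snd,
        Polynomial.smul_eq_C_mul, dcusp2, map_ofNat, ca, sa]
      ring
  · simp [R4, cuspEval_zero, Pi.single_eq_of_ne hk]

lemma R23_mem (hi : 1 ≤ i) (m : Fin (i+1)) :
    (2:K) • R2 K θ m + (3:K) • R3 K θ m ∈ Sol K θ := by
  obtain ⟨j, rfl⟩ : ∃ j, i = j + 1 := ⟨i - 1, by omega⟩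
  refine ⟨0, 0, Pi.single m ((X : Polynomial K) ^ (2*j+1)),
    MvPolynomial.isHomogeneous_zero _ _ _, MvPolynomial.isHomogeneous_zero _ _ _, fun k => ?_⟩
  rcases eq_or_ne k m with rfl | hk
  · constructor
    · refine ⟨0, ?_⟩
      simp only [R2, R3, cuspEval_zero, Pi.add_apply, Pi.smul_apply, Pi.single_eq_same,
        Prod.fst_add, Prod.smul_fst, Polynomial.smul_eq_C_mul, dcusp1, map_ofNat,
        Polynomial.C_neg, ca, sa]
      ring
    · refine ⟨0, ?_⟩
      simp only [R2, R3, cuspEval_zero, Pi.add_apply, Pi.smul_apply, Pi.single_eq_same,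
        Prod.snd_add, Prod.smul_snd, Polynomial.smul_eq_C_mul, dcusp2, map_ofNat,
        Polynomial.C_neg, ca, sa]
      ring
  · simp [R2, R3, cuspEval_zero, Pi.single_eq_of_ne hk]


lemma sum_smul_single_apply (t : Finset (Fin (i+1))) (f : Fin (i+1) → K)
    (v : Fin (i+1) → Polynomial K × Polynomial K) (b : Fin (i+1)) :
    (∑ m ∈ t, f m • (Pi.single m (v m) : Fin (i+1) → Polynomial K × Polynomial K)) b
      = if b ∈ t then f b • v b else 0 := by
  rw [Finset.sum_apply]
  simp_rw [Pi.smul_apply, Pi.single_apply, smul_ite, smul_zero]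
  exact Finset.sum_ite_eq t b _

lemma single_mem_of (k : Fin (i+1)) (n : ℕ) (p q : K)
    (hA : Pi.single k (C (- sa K θ k) * (X : Polynomial K) ^ n, C (ca K θ k) * X ^ n) ∈ Sol K θ)
    (hB : Pi.single k (C (ca K θ k) * (X : Polynomial K) ^ n, C (sa K θ k) * X ^ n) ∈ Sol K θ) :
    Pi.single k (C p * (X : Polynomial K) ^ n, C q * X ^ n) ∈ Sol K θ := by
  have h := (Sol K θ).add_mem
    ((Sol K θ).smul_mem (- p * sa K θ k + q * ca K θ k) hA)
    ((Sol K θ).smul_mem (p * ca K θ k + q * sa K θ k) hB)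
  convert h using 1
  have hC : C (sa K θ k) ^ 2 + C (ca K θ k) ^ 2 = (1 : Polynomial K) := by
    rw [← map_pow, ← map_pow, ← map_add, sq_one, map_one]
  funext b
  rcases eq_or_ne b k with rfl | hb
  · simp only [Pi.add_apply, Pi.smul_apply, Pi.single_eq_same]
    apply Prod.ext
    · simp only [Prod.smul_fst, Prod.fst_add, Polynomial.smul_eq_C_mul, map_add, map_mul,
        map_neg]
      linear_combination (- C p * (X : Polynomial K) ^ n) * hC
    · simp only [Prod.smul_snd, Prod.snd_add, Polynomial.smul_eq_C_mul, map_add, map_mul,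
        map_neg]
      linear_combination (- C q * (X : Polynomial K) ^ n) * hC
  · simp [Pi.single_eq_of_ne hb]

noncomputable def junk4 (w : Fin (i+1) → K) : Fin (i+1) → Polynomial K × Polynomial K :=
  fun b => (C (w b) * (C (ca K θ b) * X ^ (2*i+1)), C (w b) * (C (sa K θ b) * X ^ (2*i+1)))

lemma junk4_mem (w : Fin (i+1) → K) : junk4 K θ w ∈ Sol K θ := by
  have hrw : junk4 K θ w = ∑ b, w b • R4 K θ b := by
    funext b
    simp only [R4]
    rw [sum_smul_single_apply]
    simp [junk4, Polynomial.smul_eq_C_mul]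
  rw [hrw]
  exact Submodule.sum_mem _ fun b _ => (Sol K θ).smul_mem _ (R4_mem K θ b)

noncomputable def junk2 {i : ℕ} (w1 w2 : Fin (i+1) → K) : Fin (i+1) → Polynomial K × Polynomial K :=
  fun b => (C (w1 b) * X ^ (2*i+1), C (w2 b) * X ^ (2*i+1))

lemma junk2_mem (hR3 : ∀ b, R3 K θ b ∈ Sol K θ) (w1 w2 : Fin (i+1) → K) :
    junk2 K w1 w2 ∈ Sol K θ := by
  have hrw : junk2 K w1 w2
      = ∑ b, Pi.single b (C (w1 b) * (X : Polynomial K) ^ (2*i+1), C (w2 b) * X ^ (2*i+1)) := by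
    rw [Finset.univ_sum_single
      (fun b => (C (w1 b) * (X : Polynomial K) ^ (2*i+1), C (w2 b) * X ^ (2*i+1)))]
    rfl
  rw [hrw]
  exact Submodule.sum_mem _ fun b _ =>
    single_mem_of K θ b _ _ _ (hR3 b) (R4_mem K θ b)

noncomputable def Gk (k : Fin (i+1)) : MvPolynomial (Fin 2) K :=
  ∏ j ∈ univ.erase k, Dform K θ j

lemma Gk_homog (k : Fin (i+1)) : (Gk K θ k).IsHomogeneous i := by
  have h := MvPolynomial.IsHomogeneous.prod (univ.erase k) (fun j => Dform K θ j) (fun _ => 1)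
    (fun j _ => Dform_homog K θ j)
  simpa [Gk] using h

lemma cuspEval_X0 (t : ℝ) : cuspEval K t (MvPolynomial.X 0) = cusp1 K t := by
  simp [cuspEval]
lemma cuspEval_X1 (t : ℝ) : cuspEval K t (MvPolynomial.X 1) = cusp2 K t := by
  simp [cuspEval]


lemma zeta_sol (hi : 1 ≤ i) (m' : Fin (i+1)) (hm' : m' ≠ 0) :
    (∏ j ∈ ((univ.erase 0).erase m'), sn K θ j 0) • (R2 K θ 0 + R3 K θ 0)
      + (∏ j ∈ ((univ.erase 0).erase m'), sn K θ j m') • (R2 K θ m' + R3 K θ m')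
      ∈ Sol K θ := by
  classical
  set t : Finset (Fin (i+1)) := (univ.erase 0).erase m' with ht
  have hm'u : m' ∈ univ.erase (0 : Fin (i+1)) := mem_erase.mpr ⟨hm', mem_univ _⟩
  have hct : t.card = i - 1 := by
    rw [ht, card_erase_of_mem hm'u, card_erase_of_mem (mem_univ _), card_univ, Fintype.card_fin]
    omega
  have h2c0 : 2 * i = 2 * t.card + 2 := by omega
  have h2c1 : 2 * i + 1 = 2 * t.card + 3 := by omega
  have h2c2 : 2 * i + 2 = 2 * t.card + 4 := by omega
  set F : MvPolynomial (Fin 2) K := ∏ j ∈ t, Dform K θ j with hF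
  have hFhom : F.IsHomogeneous (i - 1) := by
    have h := MvPolynomial.IsHomogeneous.prod t (fun j => Dform K θ j) (fun _ => 1)
      (fun j _ => Dform_homog K θ j)
    simpa [hct] using h
  have hPhom : (MvPolynomial.X 0 * F : MvPolynomial (Fin 2) K).IsHomogeneous i := by
    have h := (MvPolynomial.isHomogeneous_X K (0 : Fin 2)).mul hFhom
    rwa [show 1 + (i-1) = i by omega] at h
  have hQhom : (MvPolynomial.X 1 * F : MvPolynomial (Fin 2) K).IsHomogeneous i := by
    have h := (MvPolynomial.isHomogeneous_X K (1 : Fin 2)).mul hFhom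
    rwa [show 1 + (i-1) = i by omega] at h
  have hfam := famPQ_mem K θ hPhom hQhom
  obtain ⟨u0, r0, h0⟩ := jet_reg K θ t 0
  obtain ⟨u1, r1, h1⟩ := jet_reg K θ t m'
  rw [← hF] at h0 h1
  set w : Fin (i+1) → K := fun b =>
    if b = 0 then u0 else if b = m' then u1 else - ∏ j ∈ t.erase b, sn K θ j b with hw
  have key : ∀ b, (X : Polynomial K)^(2*i+2) ∣
      ((famPQ K θ (MvPolynomial.X 0 * F) (MvPolynomial.X 1 * F)
        - ((∏ j ∈ t, sn K θ j 0) • (R2 K θ 0 + R3 K θ 0)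
           + (∏ j ∈ t, sn K θ j m') • (R2 K θ m' + R3 K θ m'))
        - junk4 K θ w) b).1
      ∧ (X : Polynomial K)^(2*i+2) ∣
      ((famPQ K θ (MvPolynomial.X 0 * F) (MvPolynomial.X 1 * F)
        - ((∏ j ∈ t, sn K θ j 0) • (R2 K θ 0 + R3 K θ 0)
           + (∏ j ∈ t, sn K θ j m') • (R2 K θ m' + R3 K θ m'))
        - junk4 K θ w) b).2 := by
    intro b
    have hfam1 : famPQ K θ (MvPolynomial.X 0 * F) (MvPolynomial.X 1 * F) b
        = (cusp1 K (θ b) * cuspEval K (θ b) F, cusp2 K (θ b) * cuspEval K (θ b) F) := by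
      simp [famPQ, cuspEval_mul, cuspEval_X0, cuspEval_X1]
    rcases eq_or_ne b 0 with rfl | hb0
    · have hw0 : w 0 = u0 := by simp [hw]
      simp only [Pi.sub_apply, Pi.add_apply, Pi.smul_apply, hfam1, junk4, hw0,
        R2, R3, Pi.single_eq_same, Pi.single_eq_of_ne (Ne.symm hm'),
        Prod.fst_sub, Prod.snd_sub, Prod.fst_add, Prod.snd_add,
        Prod.smul_fst, Prod.smul_snd, smul_zero, add_zero, zero_add, sub_zero, Prod.fst_zero, Prod.snd_zero,
        Polynomial.smul_eq_C_mul, h0, h2c0, h2c1, h2c2]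
      constructor
      · refine ⟨C (ca K θ 0) * r0 - C (sa K θ 0 * u0) - C (sa K θ 0) * X * r0, ?_⟩
        simp only [cusp1, ca, sa, Polynomial.C_mul, Polynomial.C_neg]
        ring
      · refine ⟨C (sa K θ 0) * r0 + C (ca K θ 0 * u0) + C (ca K θ 0) * X * r0, ?_⟩
        simp only [cusp2, ca, sa, Polynomial.C_mul, Polynomial.C_neg]
        ring
    · rcases eq_or_ne b m' with rfl | hbm'
      · have hwb : w b = u1 := by simp [hw, hm']
        simp only [Pi.sub_apply, Pi.add_apply, Pi.smul_apply, hfam1, junk4, hwb,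
          R2, R3, Pi.single_eq_same, Pi.single_eq_of_ne hm',
          Prod.fst_sub, Prod.snd_sub, Prod.fst_add, Prod.snd_add,
          Prod.smul_fst, Prod.smul_snd, smul_zero, add_zero, zero_add, sub_zero, Prod.fst_zero, Prod.snd_zero,
          Polynomial.smul_eq_C_mul, h1, h2c0, h2c1, h2c2]
        constructor
        · refine ⟨C (ca K θ b) * r1 - C (sa K θ b * u1) - C (sa K θ b) * X * r1, ?_⟩
          simp only [cusp1, ca, sa, Polynomial.C_mul, Polynomial.C_neg]
          ring
        · refine ⟨C (sa K θ b) * r1 + C (ca K θ b * u1) + C (ca K θ b) * X * r1, ?_⟩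
          simp only [cusp2, ca, sa, Polynomial.C_mul, Polynomial.C_neg]
          ring
      · have hbt : b ∈ t := by
          rw [ht]; exact mem_erase.mpr ⟨hbm', mem_erase.mpr ⟨hb0, mem_univ _⟩⟩
        obtain ⟨rb, hrb⟩ := jet_cubic K θ t b hbt
        rw [← hF] at hrb
        have hwb : w b = - ∏ j ∈ t.erase b, sn K θ j b := by simp [hw, hb0, hbm']
        simp only [Pi.sub_apply, Pi.add_apply, Pi.smul_apply, hfam1, junk4, hwb,
          R2, R3, Pi.single_eq_of_ne hb0, Pi.single_eq_of_ne hbm',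
          Prod.fst_sub, Prod.snd_sub, Prod.fst_add, Prod.snd_add,
          Prod.smul_fst, Prod.smul_snd, smul_zero, add_zero, zero_add, sub_zero, Prod.fst_zero, Prod.snd_zero,
          Polynomial.smul_eq_C_mul, hrb, h2c1, h2c2]
        constructor
        · refine ⟨C (ca K θ b) * rb - C (sa K θ b) * C (- ∏ j ∈ t.erase b, sn K θ j b)
            - C (sa K θ b) * X * rb, ?_⟩
          simp only [cusp1, ca, sa, Polynomial.C_mul, Polynomial.C_neg]
          ring
        · refine ⟨C (sa K θ b) * rb + C (ca K θ b) * C (- ∏ j ∈ t.erase b, sn K θ j b)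
            + C (ca K θ b) * X * rb, ?_⟩
          simp only [cusp2, ca, sa, Polynomial.C_mul, Polynomial.C_neg]
          ring
  have habel : (∏ j ∈ t, sn K θ j 0) • (R2 K θ 0 + R3 K θ 0)
      + (∏ j ∈ t, sn K θ j m') • (R2 K θ m' + R3 K θ m')
      = famPQ K θ (MvPolynomial.X 0 * F) (MvPolynomial.X 1 * F) - junk4 K θ w
        - (famPQ K θ (MvPolynomial.X 0 * F) (MvPolynomial.X 1 * F)
          - ((∏ j ∈ t, sn K θ j 0) • (R2 K θ 0 + R3 K θ 0)
             + (∏ j ∈ t, sn K θ j m') • (R2 K θ m' + R3 K θ m'))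
          - junk4 K θ w) := by abel
  rw [habel]
  exact Submodule.sub_mem _ (Submodule.sub_mem _ hfam (junk4_mem K θ w))
    (mem_sol_of_dvd K θ key)


lemma xi'_sol :
    (∏ j ∈ univ.erase 0, sn K θ j 0) • R2 K θ 0
      + ∑ m ∈ univ.erase 0,
          ((- ∏ j ∈ (univ.erase 0).erase m, sn K θ j m) * sn K θ 0 m) • R3 K θ m
      ∈ Sol K θ := by
  classical
  have hcard : (univ.erase (0 : Fin (i+1))).card = i := by simp
  have hPhom : (MvPolynomial.C (ca K θ 0) * Gk K θ 0).IsHomogeneous i :=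
    (Gk_homog K θ 0).C_mul _
  have hQhom : (MvPolynomial.C (sa K θ 0) * Gk K θ 0).IsHomogeneous i :=
    (Gk_homog K θ 0).C_mul _
  have hfam := famPQ_mem K θ hPhom hQhom
  obtain ⟨u0, r0, h0⟩ := jet_reg K θ (univ.erase 0) 0
  rw [hcard] at h0
  set w : Fin (i+1) → K := fun b =>
    if b = 0 then u0 else (- ∏ j ∈ (univ.erase 0).erase b, sn K θ j b) * cn K θ 0 b with hw
  set tgt : Fin (i+1) → Polynomial K × Polynomial K :=
    (∏ j ∈ univ.erase 0, sn K θ j 0) • R2 K θ 0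
      + ∑ m ∈ univ.erase 0,
          ((- ∏ j ∈ (univ.erase 0).erase m, sn K θ j m) * sn K θ 0 m) • R3 K θ m with htgt
  have key : ∀ b, (X : Polynomial K)^(2*i+2) ∣
      ((famPQ K θ (MvPolynomial.C (ca K θ 0) * Gk K θ 0) (MvPolynomial.C (sa K θ 0) * Gk K θ 0)
        - tgt - junk4 K θ w) b).1
      ∧ (X : Polynomial K)^(2*i+2) ∣
      ((famPQ K θ (MvPolynomial.C (ca K θ 0) * Gk K θ 0) (MvPolynomial.C (sa K θ 0) * Gk K θ 0)
        - tgt - junk4 K θ w) b).2 := by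
    intro b
    have hfam1 : famPQ K θ (MvPolynomial.C (ca K θ 0) * Gk K θ 0)
        (MvPolynomial.C (sa K θ 0) * Gk K θ 0) b
        = (C (ca K θ 0) * cuspEval K (θ b) (∏ j ∈ univ.erase 0, Dform K θ j),
           C (sa K θ 0) * cuspEval K (θ b) (∏ j ∈ univ.erase 0, Dform K θ j)) := by
      simp [famPQ, cuspEval_C_mul, Gk]
    have htgtb : tgt b = (∏ j ∈ univ.erase 0, sn K θ j 0) • (R2 K θ 0 b)
        + (if b ∈ univ.erase 0 then
            ((- ∏ j ∈ (univ.erase 0).erase b, sn K θ j b) * sn K θ 0 b)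
              • (C (- sa K θ b) * (X : Polynomial K) ^ (2*i+1), C (ca K θ b) * X ^ (2*i+1))
          else 0) := by
      rw [htgt]
      simp only [Pi.add_apply, Pi.smul_apply, R3]
      rw [sum_smul_single_apply]
    rcases eq_or_ne b 0 with rfl | hb0
    · have hw0 : w 0 = u0 := by simp [hw]
      simp only [Pi.sub_apply, hfam1, htgtb, junk4, hw0, if_neg (notMem_erase (0 : Fin (i+1)) _),
        R2, Pi.single_eq_same, Pi.smul_apply,
        Prod.fst_sub, Prod.snd_sub, Prod.fst_add, Prod.snd_add,
        Prod.smul_fst, Prod.smul_snd, smul_zero, add_zero, zero_add, sub_zero,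
        Prod.fst_zero, Prod.snd_zero, Polynomial.smul_eq_C_mul, h0]
      constructor
      · exact ⟨C (ca K θ 0) * r0, by ring⟩
      · exact ⟨C (sa K θ 0) * r0, by ring⟩
    · have hbm : b ∈ univ.erase (0 : Fin (i+1)) := mem_erase.mpr ⟨hb0, mem_univ _⟩
      obtain ⟨rb, hrb⟩ := jet_cubic K θ (univ.erase 0) b hbm
      rw [hcard] at hrb
      have hwb : w b = (- ∏ j ∈ (univ.erase 0).erase b, sn K θ j b) * cn K θ 0 b := by
        simp [hw, hb0]
      simp only [Pi.sub_apply, hfam1, htgtb, junk4, hwb, if_pos hbm,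
        R2, Pi.single_eq_of_ne hb0, Pi.smul_apply,
        Prod.fst_sub, Prod.snd_sub, Prod.fst_add, Prod.snd_add,
        Prod.smul_fst, Prod.smul_snd, smul_zero, add_zero, zero_add, sub_zero,
        Prod.fst_zero, Prod.snd_zero, Polynomial.smul_eq_C_mul, hrb]
      constructor
      · rw [ca_comb K θ 0 b]
        refine ⟨(C (cn K θ 0 b) * C (ca K θ b) - C (sn K θ 0 b) * C (sa K θ b)) * rb, ?_⟩
        simp only [Polynomial.C_mul, Polynomial.C_neg, Polynomial.C_sub, Polynomial.C_add]
        ring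
      · rw [sa_comb K θ 0 b]
        refine ⟨(C (sn K θ 0 b) * C (ca K θ b) + C (cn K θ 0 b) * C (sa K θ b)) * rb, ?_⟩
        simp only [Polynomial.C_mul, Polynomial.C_neg, Polynomial.C_sub, Polynomial.C_add]
        ring
  have habel : tgt
      = famPQ K θ (MvPolynomial.C (ca K θ 0) * Gk K θ 0) (MvPolynomial.C (sa K θ 0) * Gk K θ 0)
        - junk4 K θ w
        - (famPQ K θ (MvPolynomial.C (ca K θ 0) * Gk K θ 0)
            (MvPolynomial.C (sa K θ 0) * Gk K θ 0) - tgt - junk4 K θ w) := by abel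
  rw [habel]
  exact Submodule.sub_mem _ (Submodule.sub_mem _ hfam (junk4_mem K θ w))
    (mem_sol_of_dvd K θ key)

lemma xi_sol (hR3 : ∀ b, R3 K θ b ∈ Sol K θ) (k : Fin (i+1)) :
    (∏ j ∈ univ.erase k, sn K θ j k) • R1 K θ k ∈ Sol K θ := by
  classical
  have hcard : (univ.erase k).card = i := by simp
  have hPhom : (MvPolynomial.C (- sa K θ k) * Gk K θ k).IsHomogeneous i :=
    (Gk_homog K θ k).C_mul _
  have hQhom : (MvPolynomial.C (ca K θ k) * Gk K θ k).IsHomogeneous i :=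
    (Gk_homog K θ k).C_mul _
  have hfam := famPQ_mem K θ hPhom hQhom
  obtain ⟨u0, r0, h0⟩ := jet_reg K θ (univ.erase k) k
  rw [hcard] at h0
  set w : Fin (i+1) → K := fun b =>
    if b = k then u0 else - ∏ j ∈ (univ.erase k).erase b, sn K θ j b with hw
  have key : ∀ b, (X : Polynomial K)^(2*i+2) ∣
      ((famPQ K θ (MvPolynomial.C (- sa K θ k) * Gk K θ k) (MvPolynomial.C (ca K θ k) * Gk K θ k)
        - (∏ j ∈ univ.erase k, sn K θ j k) • R1 K θ k
        - junk2 K (fun b => - sa K θ k * w b) (fun b => ca K θ k * w b)) b).1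
      ∧ (X : Polynomial K)^(2*i+2) ∣
      ((famPQ K θ (MvPolynomial.C (- sa K θ k) * Gk K θ k) (MvPolynomial.C (ca K θ k) * Gk K θ k)
        - (∏ j ∈ univ.erase k, sn K θ j k) • R1 K θ k
        - junk2 K (fun b => - sa K θ k * w b) (fun b => ca K θ k * w b)) b).2 := by
    intro b
    have hfam1 : famPQ K θ (MvPolynomial.C (- sa K θ k) * Gk K θ k)
        (MvPolynomial.C (ca K θ k) * Gk K θ k) b
        = (C (- sa K θ k) * cuspEval K (θ b) (∏ j ∈ univ.erase k, Dform K θ j),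
           C (ca K θ k) * cuspEval K (θ b) (∏ j ∈ univ.erase k, Dform K θ j)) := by
      simp [famPQ, cuspEval_C_mul, cuspEval_neg, Gk]
    rcases eq_or_ne b k with rfl | hbk
    · have hw0 : w b = u0 := by simp [hw]
      simp only [Pi.sub_apply, hfam1, junk2, hw0, R1, Pi.single_eq_same, Pi.smul_apply,
        Prod.fst_sub, Prod.snd_sub, Prod.smul_fst, Prod.smul_snd,
        Polynomial.smul_eq_C_mul, h0]
      constructor
      · exact ⟨C (- sa K θ b) * r0, by
          simp only [Polynomial.C_mul, Polynomial.C_neg]; ring⟩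
      · exact ⟨C (ca K θ b) * r0, by
          simp only [Polynomial.C_mul, Polynomial.C_neg]; ring⟩
    · have hbm : b ∈ univ.erase k := mem_erase.mpr ⟨hbk, mem_univ _⟩
      obtain ⟨rb, hrb⟩ := jet_cubic K θ (univ.erase k) b hbm
      rw [hcard] at hrb
      have hwb : w b = - ∏ j ∈ (univ.erase k).erase b, sn K θ j b := by simp [hw, hbk]
      simp only [Pi.sub_apply, hfam1, junk2, hwb, R1, Pi.single_eq_of_ne hbk, Pi.smul_apply,
        Prod.fst_sub, Prod.snd_sub, Prod.smul_fst, Prod.smul_snd, smul_zero, sub_zero,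
        Prod.fst_zero, Prod.snd_zero, Polynomial.smul_eq_C_mul, hrb]
      constructor
      · exact ⟨C (- sa K θ k) * rb, by
          simp only [Polynomial.C_mul, Polynomial.C_neg]; ring⟩
      · exact ⟨C (ca K θ k) * rb, by
          simp only [Polynomial.C_mul, Polynomial.C_neg]; ring⟩
  have habel : (∏ j ∈ univ.erase k, sn K θ j k) • R1 K θ k
      = famPQ K θ (MvPolynomial.C (- sa K θ k) * Gk K θ k) (MvPolynomial.C (ca K θ k) * Gk K θ k)
        - junk2 K (fun b => - sa K θ k * w b) (fun b => ca K θ k * w b)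
        - (famPQ K θ (MvPolynomial.C (- sa K θ k) * Gk K θ k)
            (MvPolynomial.C (ca K θ k) * Gk K θ k)
          - (∏ j ∈ univ.erase k, sn K θ j k) • R1 K θ k
          - junk2 K (fun b => - sa K θ k * w b) (fun b => ca K θ k * w b)) := by abel
  rw [habel]
  exact Submodule.sub_mem _ (Submodule.sub_mem _ hfam (junk2_mem K θ hR3 _ _))
    (mem_sol_of_dvd K θ key)


lemma zeta_R3 (hi : 1 ≤ i) (m' : Fin (i+1)) (hm' : m' ≠ 0) :
    (∏ j ∈ ((univ.erase 0).erase m'), sn K θ j 0) • R3 K θ 0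
      + (∏ j ∈ ((univ.erase 0).erase m'), sn K θ j m') • R3 K θ m' ∈ Sol K θ := by
  have h := zeta_sol K θ hi m' hm'
  have h0 := R23_mem K θ hi 0
  have h1 := R23_mem K θ hi m'
  have hc := (Sol K θ).smul_mem (-1 : K) ((Sol K θ).sub_mem ((Sol K θ).sub_mem
    ((Sol K θ).smul_mem (2:K) h)
    ((Sol K θ).smul_mem (∏ j ∈ ((univ.erase 0).erase m'), sn K θ j 0) h0))
    ((Sol K θ).smul_mem (∏ j ∈ ((univ.erase 0).erase m'), sn K θ j m') h1))
  convert hc using 1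
  module

lemma xi'_R3 (hi : 1 ≤ i) :
    ((-3 : K) * ∏ j ∈ univ.erase 0, sn K θ j 0) • R3 K θ 0
      + ∑ m ∈ univ.erase 0,
          ((2:K) * ((- ∏ j ∈ (univ.erase 0).erase m, sn K θ j m) * sn K θ 0 m)) • R3 K θ m
      ∈ Sol K θ := by
  have h := xi'_sol K θ
  have h0 := R23_mem K θ hi 0
  have hc := (Sol K θ).sub_mem ((Sol K θ).smul_mem (2:K) h)
    ((Sol K θ).smul_mem (∏ j ∈ univ.erase 0, sn K θ j 0) h0)
  convert hc using 1
  rw [smul_add, Finset.smul_sum]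
  simp_rw [smul_smul]
  module

lemma R3_zero_mem (hi : 1 ≤ i) (hθa : Admissible θ) : R3 K θ 0 ∈ Sol K θ := by
  classical
  have hz := xi'_R3 K θ hi
  have hwm : ∀ m ∈ univ.erase (0 : Fin (i+1)),
      (∏ j ∈ ((univ.erase 0).erase m), sn K θ j 0) • R3 K θ 0
      + (∏ j ∈ ((univ.erase 0).erase m), sn K θ j m) • R3 K θ m ∈ Sol K θ :=
    fun m hm => zeta_R3 K θ hi m (mem_erase.mp hm).1
  have hsum := (Sol K θ).add_mem hz ((Sol K θ).sum_mem (fun m hm =>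
    (Sol K θ).smul_mem ((2:K) * sn K θ 0 m) (hwm m hm)))
  have hkey : (((-3 : K) * ∏ j ∈ univ.erase 0, sn K θ j 0) • R3 K θ 0
      + ∑ m ∈ univ.erase 0,
          ((2:K) * ((- ∏ j ∈ (univ.erase 0).erase m, sn K θ j m) * sn K θ 0 m)) • R3 K θ m)
      + ∑ m ∈ univ.erase 0, ((2:K) * sn K θ 0 m) •
          ((∏ j ∈ ((univ.erase 0).erase m), sn K θ j 0) • R3 K θ 0
            + (∏ j ∈ ((univ.erase 0).erase m), sn K θ j m) • R3 K θ m)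
      = ((-(3:K) - 2*i) * ∏ j ∈ univ.erase 0, sn K θ j 0) • R3 K θ 0 := by
    rw [add_assoc, ← Finset.sum_add_distrib]
    have hterm : ∀ m ∈ univ.erase (0 : Fin (i+1)),
        ((2:K) * ((- ∏ j ∈ (univ.erase 0).erase m, sn K θ j m) * sn K θ 0 m)) • R3 K θ m
        + ((2:K) * sn K θ 0 m) •
          ((∏ j ∈ ((univ.erase 0).erase m), sn K θ j 0) • R3 K θ 0
            + (∏ j ∈ ((univ.erase 0).erase m), sn K θ j m) • R3 K θ m)
        = (((-2:K)) * ∏ j ∈ univ.erase 0, sn K θ j 0) • R3 K θ 0 := by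
      intro m hm
      have h1 : sn K θ 0 m * ∏ j ∈ (univ.erase 0).erase m, sn K θ j 0
          = - ∏ j ∈ univ.erase 0, sn K θ j 0 := by
        rw [sn_anti K θ 0 m, neg_mul, Finset.mul_prod_erase (univ.erase 0)
          (fun j => sn K θ j 0) hm]
      match_scalars <;>
        first
          | ring1
          | linear_combination (2:K) * h1
          | linear_combination (-2:K) * h1
    rw [Finset.sum_congr rfl hterm, Finset.sum_const,
      show (univ.erase (0 : Fin (i+1))).card = i by simp,
      ← Nat.cast_smul_eq_nsmul K]
    module
  rw [hkey] at hsum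
  have hne : ((-(3:K) - 2*i) * ∏ j ∈ univ.erase 0, sn K θ j 0) ≠ 0 := by
    apply mul_ne_zero
    · have h3 : ((3 + 2*i : ℕ) : K) ≠ 0 := Nat.cast_ne_zero.mpr (by omega)
      intro h
      apply h3
      push_cast
      linear_combination -h
    · exact Finset.prod_ne_zero_iff.mpr fun j hj => sn_ne K θ hθa (mem_erase.mp hj).1
  exact smul_cancel K θ hne hsum

lemma R3_mem (hi : 1 ≤ i) (hθa : Admissible θ) (m : Fin (i+1)) : R3 K θ m ∈ Sol K θ := by
  rcases eq_or_ne m 0 with rfl | hm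
  · exact R3_zero_mem K θ hi hθa
  · have hw := zeta_R3 K θ hi m hm
    have h0 := R3_zero_mem K θ hi hθa
    have hmem : (∏ j ∈ (univ.erase 0).erase m, sn K θ j m) • R3 K θ m ∈ Sol K θ := by
      have hc := (Sol K θ).sub_mem hw
        ((Sol K θ).smul_mem (∏ j ∈ (univ.erase 0).erase m, sn K θ j 0) h0)
      convert hc using 1
      module
    refine smul_cancel K θ ?_ hmem
    exact Finset.prod_ne_zero_iff.mpr fun j hj => sn_ne K θ hθa (mem_erase.mp hj).1
  
lemma R2_mem (hi : 1 ≤ i) (hθa : Admissible θ) (m : Fin (i+1)) : R2 K θ m ∈ Sol K θ := by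
  have hc := (Sol K θ).sub_mem (R23_mem K θ hi m)
    ((Sol K θ).smul_mem (3:K) (R3_mem K θ hi hθa m))
  apply smul_cancel K θ (two_ne_zero (α := K))
  convert hc using 1
  module

lemma R1_mem (hi : 1 ≤ i) (hθa : Admissible θ) (k : Fin (i+1)) : R1 K θ k ∈ Sol K θ := by
  refine smul_cancel K θ ?_ (xi_sol K θ (R3_mem K θ hi hθa) k)
  exact Finset.prod_ne_zero_iff.mpr fun j hj => sn_ne K θ hθa (mem_erase.mp hj).1


lemma single_pair_mem (hi : 1 ≤ i) (hθa : Admissible θ) (k : Fin (i+1)) (p p' q q' : K) :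
    Pi.single k (C p * (X : Polynomial K) ^ (2*i) + C p' * X ^ (2*i+1),
                 C q * X ^ (2*i) + C q' * X ^ (2*i+1)) ∈ Sol K θ := by
  have hA1 : Pi.single k (C (- sa K θ k) * (X : Polynomial K) ^ (2*i),
      C (ca K θ k) * X ^ (2*i)) ∈ Sol K θ := R1_mem K θ hi hθa k
  have hB1 : Pi.single k (C (ca K θ k) * (X : Polynomial K) ^ (2*i),
      C (sa K θ k) * X ^ (2*i)) ∈ Sol K θ := R2_mem K θ hi hθa k
  have hA2 : Pi.single k (C (- sa K θ k) * (X : Polynomial K) ^ (2*i+1),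
      C (ca K θ k) * X ^ (2*i+1)) ∈ Sol K θ := R3_mem K θ hi hθa k
  have hB2 : Pi.single k (C (ca K θ k) * (X : Polynomial K) ^ (2*i+1),
      C (sa K θ k) * X ^ (2*i+1)) ∈ Sol K θ := R4_mem K θ k
  have h1 := single_mem_of K θ k (2*i) p q hA1 hB1
  have h2 := single_mem_of K θ k (2*i+1) p' q' hA2 hB2
  have h := (Sol K θ).add_mem h1 h2
  convert h using 1
  rw [← Pi.single_add]
  rfl

end KSMproof

/-- Surjectivity of the `i`-th reduced Kodaira–Spencer–Mather map of the multicusp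
`c_(θ₀,…,θ_i)` for `i ≥ 1`: every branchwise family of pairs of polynomials divisible by
`x^(2i)` is, modulo `x^(2i+2)` and modulo multiples of the branch derivatives, realized by
a single pair of homogeneous degree-`i` vector-field components `(P, Q)`. -/
theorem multicusp_KSM_surjective (K : Type*) [RCLike K] (i : ℕ) (hi : 1 ≤ i)
    (θ : Fin (i + 1) → ℝ) (hθ : Admissible θ)
    (A B : Fin (i + 1) → Polynomial K)
    (hA : ∀ k, (X : Polynomial K) ^ (2 * i) ∣ A k)
    (hB : ∀ k, (X : Polynomial K) ^ (2 * i) ∣ B k) :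
    ∃ (P Q : MvPolynomial (Fin 2) K) (η : Fin (i + 1) → Polynomial K),
      P.IsHomogeneous i ∧ Q.IsHomogeneous i ∧
      ∀ k, (X : Polynomial K) ^ (2 * i + 2) ∣ A k - cuspEval K (θ k) P - η k * dcusp1 K (θ k) ∧
        (X : Polynomial K) ^ (2 * i + 2) ∣ B k - cuspEval K (θ k) Q - η k * dcusp2 K (θ k) := by
  classical
  open KSMproof in
  have hmain : (fun k => (C ((A k).coeff (2*i)) * (X : Polynomial K) ^ (2*i)
        + C ((A k).coeff (2*i+1)) * X ^ (2*i+1),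
      C ((B k).coeff (2*i)) * (X : Polynomial K) ^ (2*i)
        + C ((B k).coeff (2*i+1)) * X ^ (2*i+1))) ∈ KSMproof.Sol K θ := by
    rw [← Finset.univ_sum_single (fun k => (C ((A k).coeff (2*i)) * (X : Polynomial K) ^ (2*i)
        + C ((A k).coeff (2*i+1)) * X ^ (2*i+1),
      C ((B k).coeff (2*i)) * (X : Polynomial K) ^ (2*i)
        + C ((B k).coeff (2*i+1)) * X ^ (2*i+1)))]
    exact (KSMproof.Sol K θ).sum_mem fun k _ => KSMproof.single_pair_mem K θ hi hθ k _ _ _ _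
  have hrest : ((fun k => (A k, B k)) - (fun k => (C ((A k).coeff (2*i)) * (X : Polynomial K) ^ (2*i)
        + C ((A k).coeff (2*i+1)) * X ^ (2*i+1),
      C ((B k).coeff (2*i)) * (X : Polynomial K) ^ (2*i)
        + C ((B k).coeff (2*i+1)) * X ^ (2*i+1)))) ∈ KSMproof.Sol K θ := by
    apply KSMproof.mem_sol_of_dvd
    intro b
    have hdvd : ∀ (p : Polynomial K), (X : Polynomial K) ^ (2*i) ∣ p →
        (X : Polynomial K) ^ (2*i+2) ∣
          p - (C (p.coeff (2*i)) * X ^ (2*i) + C (p.coeff (2*i+1)) * X ^ (2*i+1)) := by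
      intro p hp
      rw [Polynomial.X_pow_dvd_iff]
      intro d hd
      simp only [Polynomial.coeff_sub, Polynomial.coeff_add, Polynomial.coeff_C_mul,
        Polynomial.coeff_X_pow]
      rcases eq_or_ne d (2*i) with rfl | h1
      · rw [if_pos rfl, if_neg (by omega)]
        ring
      · rcases eq_or_ne d (2*i+1) with rfl | h2
        · rw [if_neg (by omega), if_pos rfl]
          ring
        · rw [if_neg (by omega), if_neg (by omega),
            Polynomial.X_pow_dvd_iff.mp hp d (by omega)]
          ring
    exact ⟨hdvd (A b) (hA b), hdvd (B b) (hB b)⟩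
  have hg : (fun k => (A k, B k)) ∈ KSMproof.Sol K θ := by
    have h := (KSMproof.Sol K θ).add_mem hmain hrest
    convert h using 1
    abel
  obtain ⟨P, Q, η, hP, hQ, hcond⟩ := hg
  exact ⟨P, Q, η, hP, hQ, fun k => hcond k⟩
end

section
/- Let m ≥ 1 be an integer and let φ₁, …, φ_m be an admissible family of real angles (φ_j − φ_k ∉ πℤ for all j ≠ k). Then the subspace {ξ ∈ V_m : ξ is m-liftably tangent to c_{φ_k} for every k ∈ {1, …, m}} of V_m has K-dimension exactly 2. (This is the kernel of the (k+1)-st reduced Kodaira–Spencer–Mather map of the multicusp c_{θ̂_j} obtained by removing one branch from a multicusp with m + 1 branches.) -/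
open Polynomial

namespace KSM

variable (K : Type*) [RCLike K]

noncomputable def rpoly (θ : ℝ) : Polynomial K :=
  C ((Real.cos θ : K)) - C ((Real.sin θ : K)) * X

noncomputable def spoly (θ : ℝ) : Polynomial K :=
  C ((Real.sin θ : K)) + C ((Real.cos θ : K)) * X

noncomputable def ae (θ : ℝ) : MvPolynomial (Fin 2) K →ₐ[K] Polynomial K :=
  MvPolynomial.aeval ![rpoly K θ, spoly K θ]

noncomputable def ev (θ : ℝ) : MvPolynomial (Fin 2) K →ₐ[K] K :=
  MvPolynomial.aeval ![((Real.cos θ : K)), ((Real.sin θ : K))]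

noncomputable def lf (θ : ℝ) : MvPolynomial (Fin 2) K :=
  MvPolynomial.C ((Real.cos θ : K)) * MvPolynomial.X 1
    - MvPolynomial.C ((Real.sin θ : K)) * MvPolynomial.X 0

variable {K}

lemma hcs (θ : ℝ) : ((Real.cos θ : K))^2 + ((Real.sin θ : K))^2 = 1 := by
  have h := Real.cos_sq_add_sin_sq θ
  calc ((Real.cos θ : K))^2 + ((Real.sin θ : K))^2
      = ((Real.cos θ ^ 2 + Real.sin θ ^ 2 : ℝ) : K) := by push_cast; ring
    _ = 1 := by rw [h]; simp

/-- scaling: aeval at `z * v i` of a homogeneous polynomial -/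
lemma aeval_scale {A : Type*} [CommRing A] [Algebra K A]
    {F : MvPolynomial (Fin 2) K} {d : ℕ} (hF : F.IsHomogeneous d)
    (z : A) (v : Fin 2 → A) :
    MvPolynomial.aeval (fun i => z * v i) F = z ^ d * MvPolynomial.aeval v F := by
  conv_lhs => rw [F.as_sum]
  conv_rhs => rw [F.as_sum]
  rw [map_sum, map_sum, Finset.mul_sum]
  apply Finset.sum_congr rfl
  intro u hu
  rw [MvPolynomial.aeval_monomial, MvPolynomial.aeval_monomial]
  have hdeg : ∑ i ∈ u.support, u i = d := by
    have := hF (MvPolynomial.mem_support_iff.mp hu)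
    simpa [Finsupp.weight_apply, Finsupp.sum, Finsupp.degree] using this
  have : (u.prod fun i k => (z * v i) ^ k) = z ^ d * u.prod fun i k => v i ^ k := by
    rw [Finsupp.prod, Finsupp.prod]
    rw [← hdeg]
    rw [← Finset.prod_pow_eq_pow_sum]
    rw [← Finset.prod_mul_distrib]
    apply Finset.prod_congr rfl
    intro i _
    rw [mul_pow]
  rw [this]; ring

lemma cusp1_eq (θ : ℝ) : cusp1 K θ = X ^ 2 * rpoly K θ := by
  simp only [cusp1, rpoly]; ring

lemma cusp2_eq (θ : ℝ) : cusp2 K θ = X ^ 2 * spoly K θ := by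
  simp only [cusp2, spoly]; ring

/-- Key lemma A: composition with the cusp of a homogeneous polynomial. -/
lemma cuspEval_homog (θ : ℝ) {F : MvPolynomial (Fin 2) K} {d : ℕ}
    (hF : F.IsHomogeneous d) :
    cuspEval K θ F = X ^ (2 * d) * ae K θ F := by
  have h1 : ![cusp1 K θ, cusp2 K θ] = fun i => X ^ 2 * (![rpoly K θ, spoly K θ]) i := by
    funext i
    fin_cases i
    · exact cusp1_eq θ
    · exact cusp2_eq θ
  rw [cuspEval, h1, aeval_scale hF, ← pow_mul, ae]


lemma lf_isHomogeneous (θ : ℝ) : (lf K θ).IsHomogeneous 1 := by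
  apply MvPolynomial.IsHomogeneous.sub <;>
  · rw [show (1:ℕ) = 0 + 1 by rfl]
    exact (MvPolynomial.isHomogeneous_C _ _).mul (MvPolynomial.isHomogeneous_X _ _)

lemma ae_apply (θ : ℝ) (F : MvPolynomial (Fin 2) K) :
    ae K θ F = MvPolynomial.aeval ![rpoly K θ, spoly K θ] F := rfl

lemma ae_X0 (θ : ℝ) : ae K θ (MvPolynomial.X 0) = rpoly K θ := by
  simp [ae]

lemma ae_X1 (θ : ℝ) : ae K θ (MvPolynomial.X 1) = spoly K θ := by
  simp [ae]

lemma C_hcs (θ : ℝ) : (C ((Real.cos θ : K)))^2 + (C ((Real.sin θ : K)))^2 = (1 : Polynomial K) := by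
  have h := hcs (K := K) θ
  rw [← Polynomial.C_pow, ← Polynomial.C_pow, ← Polynomial.C_add, h, Polynomial.C_1]

lemma ae_lf (θ : ℝ) : ae K θ (lf K θ) = X := by
  have h := C_hcs (K := K) θ
  simp only [lf, map_sub, map_mul, MvPolynomial.aeval_C, ae,
    Polynomial.algebraMap_eq, rpoly, spoly, MvPolynomial.aeval_X,
    Matrix.cons_val_zero, Matrix.cons_val_one, Matrix.head_cons]
  linear_combination X * h

lemma ev_lf (ψ θ : ℝ) : ev K ψ (lf K θ) = ((Real.sin (ψ - θ) : ℝ) : K) := by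
  simp only [lf, map_sub, map_mul, MvPolynomial.aeval_C, ev, MvPolynomial.aeval_X]
  rw [Real.sin_sub]
  push_cast
  simp [MvPolynomial.algebraMap_eq]
  ring

lemma ae_eval0 (θ : ℝ) (F : MvPolynomial (Fin 2) K) :
    (ae K θ F).eval 0 = ev K θ F := by
  have : (Polynomial.aeval (0:K)).comp (ae K θ) = ev K θ := by
    rw [ae, MvPolynomial.comp_aeval]
    congr 1
    funext i
    fin_cases i <;> simp [rpoly, spoly]
  calc (ae K θ F).eval 0 = (Polynomial.aeval (0:K)) (ae K θ F) := by
        rw [Polynomial.coe_aeval_eq_eval]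
    _ = ev K θ F := by rw [← this]; rfl

lemma degree2 (u : Fin 2 →₀ ℕ) : u.degree = u 0 + u 1 := by
  rw [Finsupp.degree, ← Fin.sum_univ_two (f := fun i => u i)]
  exact Finset.sum_subset (Finset.subset_univ u.support)
    (fun i _ hi => Finsupp.notMem_support_iff.mp hi)

lemma homog_pderiv {F : MvPolynomial (Fin 2) K} {d : ℕ} (hF : F.IsHomogeneous d) (i : Fin 2) :
    (MvPolynomial.pderiv i F).IsHomogeneous (d - 1) := by
  conv_lhs => rw [F.as_sum]
  rw [map_sum]
  apply MvPolynomial.IsHomogeneous.sum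
  intro u hu
  rw [MvPolynomial.pderiv_monomial]
  by_cases h0 : u i = 0
  · rw [h0]; simp
    exact MvPolynomial.isHomogeneous_zero _ _ _
  · apply MvPolynomial.isHomogeneous_monomial
    have hd : u 0 + u 1 = d := by
      have h1 := hF (MvPolynomial.mem_support_iff.mp hu)
      rw [← degree2]
      rw [Finsupp.degree_eq_weight_one]; exact h1
    have hi : i = 0 ∨ i = 1 := by fin_cases i; exacts [Or.inl rfl, Or.inr rfl]
    rw [degree2]
    rcases hi with rfl | rfl <;>
      simp only [Finsupp.tsub_apply, Finsupp.single_eq_same,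
        Finsupp.single_eq_of_ne (show (0:Fin 2) ≠ 1 by decide),
        Finsupp.single_eq_of_ne (show (1:Fin 2) ≠ 0 by decide)] <;>
      omega

lemma pderiv0_lf (θ : ℝ) :
    MvPolynomial.pderiv 0 (lf K θ) = - MvPolynomial.C ((Real.sin θ : K)) := by
  simp [lf]

lemma pderiv1_lf (θ : ℝ) :
    MvPolynomial.pderiv 1 (lf K θ) = MvPolynomial.C ((Real.cos θ : K)) := by
  simp [lf]

variable (K)

noncomputable def zeta1 (g : MvPolynomial (Fin 2) K) :
    MvPolynomial (Fin 2) K × MvPolynomial (Fin 2) K :=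
  (2 * g + 4 * (MvPolynomial.X 0 * MvPolynomial.pderiv 0 g),
   4 * (MvPolynomial.X 1 * MvPolynomial.pderiv 0 g))

noncomputable def zeta2 (g : MvPolynomial (Fin 2) K) :
    MvPolynomial (Fin 2) K × MvPolynomial (Fin 2) K :=
  (4 * (MvPolynomial.X 0 * MvPolynomial.pderiv 1 g),
   2 * g + 4 * (MvPolynomial.X 1 * MvPolynomial.pderiv 1 g))

variable {K}

lemma two_mul_homog {F : MvPolynomial (Fin 2) K} {d : ℕ} (hF : F.IsHomogeneous d) :
    ((2 : MvPolynomial (Fin 2) K) * F).IsHomogeneous d := by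
  rw [two_mul]; exact hF.add hF

lemma four_mul_homog {F : MvPolynomial (Fin 2) K} {d : ℕ} (hF : F.IsHomogeneous d) :
    ((4 : MvPolynomial (Fin 2) K) * F).IsHomogeneous d := by
  rw [show (4 : MvPolynomial (Fin 2) K) * F = F + F + F + F by ring]
  exact ((hF.add hF).add hF).add hF

lemma zeta1_mem {g : MvPolynomial (Fin 2) K} {M : ℕ} (hg : g.IsHomogeneous (M + 1)) :
    zeta1 K g ∈ Vsp K (M + 1) := by
  have hpd := homog_pderiv hg 0
  simp only [Nat.add_sub_cancel] at hpd
  have hX : (MvPolynomial.X 0 * MvPolynomial.pderiv 0 g).IsHomogeneous (M + 1) :=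
    (add_comm 1 M) ▸ ((MvPolynomial.isHomogeneous_X _ _).mul hpd)
  have hX' : (MvPolynomial.X 1 * MvPolynomial.pderiv 0 g).IsHomogeneous (M + 1) :=
    (add_comm 1 M) ▸ ((MvPolynomial.isHomogeneous_X _ _).mul hpd)
  exact ⟨(two_mul_homog hg).add (four_mul_homog hX), four_mul_homog hX'⟩

lemma zeta2_mem {g : MvPolynomial (Fin 2) K} {M : ℕ} (hg : g.IsHomogeneous (M + 1)) :
    zeta2 K g ∈ Vsp K (M + 1) := by
  have hpd := homog_pderiv hg 1
  simp only [Nat.add_sub_cancel] at hpd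
  have hX : (MvPolynomial.X 0 * MvPolynomial.pderiv 1 g).IsHomogeneous (M + 1) :=
    (add_comm 1 M) ▸ ((MvPolynomial.isHomogeneous_X _ _).mul hpd)
  have hX' : (MvPolynomial.X 1 * MvPolynomial.pderiv 1 g).IsHomogeneous (M + 1) :=
    (add_comm 1 M) ▸ ((MvPolynomial.isHomogeneous_X _ _).mul hpd)
  exact ⟨four_mul_homog hX, (two_mul_homog hg).add (four_mul_homog hX')⟩

lemma ae_C (θ : ℝ) (r : K) : ae K θ (MvPolynomial.C r) = C r := by
  simp [ae, MvPolynomial.algebraMap_eq, Polynomial.algebraMap_eq]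

lemma ae_pd0 (θ : ℝ) (h : MvPolynomial (Fin 2) K) :
    ae K θ (MvPolynomial.pderiv 0 (lf K θ * h)) =
      - C ((Real.sin θ : K)) * ae K θ h + X * ae K θ (MvPolynomial.pderiv 0 h) := by
  rw [MvPolynomial.pderiv_mul, map_add, map_mul, map_mul, pderiv0_lf, ae_lf, map_neg, ae_C]

lemma ae_pd1 (θ : ℝ) (h : MvPolynomial (Fin 2) K) :
    ae K θ (MvPolynomial.pderiv 1 (lf K θ * h)) =
      C ((Real.cos θ : K)) * ae K θ h + X * ae K θ (MvPolynomial.pderiv 1 h) := by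
  rw [MvPolynomial.pderiv_mul, map_add, map_mul, map_mul, pderiv1_lf, ae_lf, ae_C]

lemma liftTang_zeta1 (θ : ℝ) {h : MvPolynomial (Fin 2) K} {n : ℕ} (hh : h.IsHomogeneous n) :
    LiftTang K (n + 1) θ (zeta1 K (lf K θ * h)) := by
  have hg : (lf K θ * h).IsHomogeneous (n + 1) :=
    (add_comm 1 n) ▸ ((lf_isHomogeneous θ).mul hh)
  obtain ⟨h1, h2⟩ := zeta1_mem (M := n) hg
  set c : K := (Real.cos θ : K) with hc
  set s : K := (Real.sin θ : K) with hs
  set H : Polynomial K := ae K θ h with hH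
  set HX : Polynomial K := ae K θ (MvPolynomial.pderiv 0 h) with hHX
  have hCcs := C_hcs (K := K) θ
  rw [← hc, ← hs] at hCcs
  have e1 : cuspEval K θ (zeta1 K (lf K θ * h)).1
      = X ^ (2*(n+1)) * ae K θ ((zeta1 K (lf K θ * h)).1) :=
    cuspEval_homog θ ((MvPolynomial.mem_homogeneousSubmodule _ _).mp h1)
  have e2 : cuspEval K θ (zeta1 K (lf K θ * h)).2
      = X ^ (2*(n+1)) * ae K θ ((zeta1 K (lf K θ * h)).2) :=
    cuspEval_homog θ ((MvPolynomial.mem_homogeneousSubmodule _ _).mp h2)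
  have a1 : ae K θ ((zeta1 K (lf K θ * h)).1)
      = 2 * (X * H) + 4 * (rpoly K θ * (- C s * H + X * HX)) := by
    simp only [zeta1, map_add, map_mul, map_ofNat, ae_X0, ae_pd0]
    rw [ae_lf]
  have a2 : ae K θ ((zeta1 K (lf K θ * h)).2)
      = 4 * (spoly K θ * (- C s * H + X * HX)) := by
    simp only [zeta1, map_add, map_mul, map_ofNat, ae_X1, ae_pd0]
    rfl
  refine ⟨X ^ (2*n+1) * (2 * (- C s * H) + X * (2 * HX + C c * H)), ?_, ?_⟩
  · refine ⟨C s * (2 * HX + 3 * (C c * H)), ?_⟩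
    rw [e1, a1]
    simp only [dcusp1, rpoly, ← hc, ← hs]
    linear_combination (-(2 * X^(2*n+3) * H)) * hCcs
  · refine ⟨- C c * (2 * HX + 3 * (C c * H)), ?_⟩
    rw [e2, a2]
    simp only [dcusp2, spoly, ← hc, ← hs]
    ring

lemma liftTang_zeta2 (θ : ℝ) {h : MvPolynomial (Fin 2) K} {n : ℕ} (hh : h.IsHomogeneous n) :
    LiftTang K (n + 1) θ (zeta2 K (lf K θ * h)) := by
  have hg : (lf K θ * h).IsHomogeneous (n + 1) :=
    (add_comm 1 n) ▸ ((lf_isHomogeneous θ).mul hh)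
  obtain ⟨h1, h2⟩ := zeta2_mem (M := n) hg
  set c : K := (Real.cos θ : K) with hc
  set s : K := (Real.sin θ : K) with hs
  set H : Polynomial K := ae K θ h with hH
  set HY : Polynomial K := ae K θ (MvPolynomial.pderiv 1 h) with hHY
  have hCcs := C_hcs (K := K) θ
  rw [← hc, ← hs] at hCcs
  have e1 : cuspEval K θ (zeta2 K (lf K θ * h)).1
      = X ^ (2*(n+1)) * ae K θ ((zeta2 K (lf K θ * h)).1) :=
    cuspEval_homog θ ((MvPolynomial.mem_homogeneousSubmodule _ _).mp h1)
  have e2 : cuspEval K θ (zeta2 K (lf K θ * h)).2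
      = X ^ (2*(n+1)) * ae K θ ((zeta2 K (lf K θ * h)).2) :=
    cuspEval_homog θ ((MvPolynomial.mem_homogeneousSubmodule _ _).mp h2)
  have a1 : ae K θ ((zeta2 K (lf K θ * h)).1)
      = 4 * (rpoly K θ * (C c * H + X * HY)) := by
    simp only [zeta2, map_add, map_mul, map_ofNat, ae_X0, ae_pd1]
    rfl
  have a2 : ae K θ ((zeta2 K (lf K θ * h)).2)
      = 2 * (X * H) + 4 * (spoly K θ * (C c * H + X * HY)) := by
    simp only [zeta2, map_add, map_mul, map_ofNat, ae_X1, ae_pd1]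
    rw [ae_lf]
  refine ⟨X ^ (2*n+1) * (2 * (C c * H) + X * (2 * HY + C s * H)), ?_, ?_⟩
  · refine ⟨C s * (2 * HY + 3 * (C s * H)), ?_⟩
    rw [e1, a1]
    simp only [dcusp1, rpoly, ← hc, ← hs]
    ring
  · refine ⟨- C c * (2 * HY + 3 * (C s * H)), ?_⟩
    rw [e2, a2]
    simp only [dcusp2, spoly, ← hc, ← hs]
    linear_combination (-(2 * X^(2*n+3) * H)) * hCcs

lemma aeval_eq_eval' (v : Fin 2 → K) (F : MvPolynomial (Fin 2) K) :
    MvPolynomial.aeval v F = MvPolynomial.eval v F := by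
  rw [← MvPolynomial.coe_aeval_eq_eval]
  rfl

lemma fin2_cases (i : Fin 2) : i = 0 ∨ i = 1 := by
  fin_cases i; exacts [Or.inl rfl, Or.inr rfl]

lemma support_degree {F : MvPolynomial (Fin 2) K} {d : ℕ} (hF : F.IsHomogeneous d)
    {u : Fin 2 →₀ ℕ} (hu : u ∈ F.support) : u 0 + u 1 = d := by
  have h1 := hF (MvPolynomial.mem_support_iff.mp hu)
  rw [← degree2]
  rw [Finsupp.degree_eq_weight_one]; exact h1

lemma eq_single_of_homog {F : MvPolynomial (Fin 2) K} {d : ℕ} (hF : F.IsHomogeneous d)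
    {u : Fin 2 →₀ ℕ} (hu : u ∈ F.support) (h1 : u 1 = 0) : u = Finsupp.single 0 d := by
  have h0 : u 0 = d := by have := support_degree hF hu; omega
  ext i
  rcases fin2_cases i with rfl | rfl
  · simp [h0, Finsupp.single_apply]
  · simp [h1, Finsupp.single_apply]

lemma eq_single_of_homog' {F : MvPolynomial (Fin 2) K} {d : ℕ} (hF : F.IsHomogeneous d)
    {u : Fin 2 →₀ ℕ} (hu : u ∈ F.support) (h0 : u 0 = 0) : u = Finsupp.single 1 d := by
  have h1 : u 1 = d := by have := support_degree hF hu; omega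
  ext i
  rcases fin2_cases i with rfl | rfl
  · simp [h0, Finsupp.single_apply]
  · simp [h1, Finsupp.single_apply]

lemma X1_dvd_of_homog {F : MvPolynomial (Fin 2) K} {d : ℕ} (hF : F.IsHomogeneous d)
    (h0 : MvPolynomial.aeval ![(1:K), 0] F = 0) : MvPolynomial.X 1 ∣ F := by
  have hsupp : ∀ u ∈ F.support, u 1 ≠ 0 := by
    intro u hu hu1
    have huu := eq_single_of_homog hF hu hu1
    rw [aeval_eq_eval', MvPolynomial.eval_eq] at h0
    rw [Finset.sum_eq_single u] at h0
    · have hprod : (∏ i ∈ u.support, (![(1:K), 0]) i ^ u i) = 1 := by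
        apply Finset.prod_eq_one
        intro i hi
        have : i = 0 := by
          by_contra hne
          rcases fin2_cases i with rfl | rfl
          · exact hne rfl
          · exact (Finsupp.mem_support_iff.mp hi) hu1
        subst this; simp
      rw [hprod, mul_one] at h0
      exact (MvPolynomial.mem_support_iff.mp hu) h0
    · intro v hv hvne
      have hv1 : v 1 ≠ 0 := by
        intro hv1
        exact hvne ((eq_single_of_homog hF hv hv1).trans huu.symm)
      apply mul_eq_zero_of_right
      apply Finset.prod_eq_zero (Finsupp.mem_support_iff.mpr hv1)
      simp [zero_pow hv1]
    · intro hne; exact absurd hu hne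
  -- now build divisibility
  conv_rhs => rw [F.as_sum]
  apply Finset.dvd_sum
  intro u hu
  have h1 : Finsupp.single 1 1 ≤ u := by
    rw [Finsupp.single_le_iff]
    exact Nat.one_le_iff_ne_zero.mpr (hsupp u hu)
  refine ⟨MvPolynomial.monomial (u - Finsupp.single 1 1) (F.coeff u), ?_⟩
  rw [MvPolynomial.X, MvPolynomial.monomial_mul, one_mul, add_tsub_cancel_of_le h1]

lemma X0_dvd_of_homog {F : MvPolynomial (Fin 2) K} {d : ℕ} (hF : F.IsHomogeneous d)
    (h0 : MvPolynomial.aeval ![(0:K), 1] F = 0) : MvPolynomial.X 0 ∣ F := by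
  have hsupp : ∀ u ∈ F.support, u 0 ≠ 0 := by
    intro u hu hu0
    have huu := eq_single_of_homog' hF hu hu0
    rw [aeval_eq_eval', MvPolynomial.eval_eq] at h0
    rw [Finset.sum_eq_single u] at h0
    · have hprod : (∏ i ∈ u.support, (![(0:K), 1]) i ^ u i) = 1 := by
        apply Finset.prod_eq_one
        intro i hi
        have : i = 1 := by
          by_contra hne
          rcases fin2_cases i with rfl | rfl
          · exact (Finsupp.mem_support_iff.mp hi) hu0
          · exact hne rfl
        subst this; simp
      rw [hprod, mul_one] at h0
      exact (MvPolynomial.mem_support_iff.mp hu) h0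
    · intro v hv hvne
      have hv0 : v 0 ≠ 0 := by
        intro hv0
        exact hvne ((eq_single_of_homog' hF hv hv0).trans huu.symm)
      apply mul_eq_zero_of_right
      apply Finset.prod_eq_zero (Finsupp.mem_support_iff.mpr hv0)
      simp [zero_pow hv0]
    · intro hne; exact absurd hu hne
  conv_rhs => rw [F.as_sum]
  apply Finset.dvd_sum
  intro u hu
  have h1 : Finsupp.single 0 1 ≤ u := by
    rw [Finsupp.single_le_iff]
    exact Nat.one_le_iff_ne_zero.mpr (hsupp u hu)
  refine ⟨MvPolynomial.monomial (u - Finsupp.single 0 1) (F.coeff u), ?_⟩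
  rw [MvPolynomial.X, MvPolynomial.monomial_mul, one_mul, add_tsub_cancel_of_le h1]

open MvPolynomial in
lemma hc_mul_homog {G H' : MvPolynomial (Fin 2) K} {k : ℕ} (hG : G.IsHomogeneous k) (N : ℕ) :
    homogeneousComponent N (G * H') =
      if k ≤ N then G * homogeneousComponent (N - k) H' else 0 := by
  have expand : G * H' = ∑ j ∈ Finset.range (H'.totalDegree + 1),
      G * homogeneousComponent j H' := by
    rw [← Finset.mul_sum, MvPolynomial.sum_homogeneousComponent]
  rw [expand, map_sum]
  have hterm : ∀ j, homogeneousComponent N (G * homogeneousComponent j H')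
      = if N = k + j then G * homogeneousComponent j H' else 0 := by
    intro j
    exact MvPolynomial.homogeneousComponent_of_mem
      ((MvPolynomial.mem_homogeneousSubmodule _ _).mpr
        (hG.mul (MvPolynomial.homogeneousComponent_isHomogeneous j H')))
  simp_rw [hterm]
  by_cases hk : k ≤ N
  · rw [if_pos hk]
    by_cases hmem : N - k ∈ Finset.range (H'.totalDegree + 1)
    · rw [Finset.sum_eq_single (N - k)]
      · rw [if_pos (by omega)]
      · intro j hj hne
        rw [if_neg (by omega)]
      · intro hnm; exact absurd hmem hnm
    · rw [Finset.sum_eq_zero, MvPolynomial.homogeneousComponent_eq_zero, mul_zero]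
      · simp only [Finset.mem_range, not_lt] at hmem; omega
      · intro j hj
        simp only [Finset.mem_range] at hj hmem
        rw [if_neg (by omega)]
  · rw [if_neg hk, Finset.sum_eq_zero]
    intro j hj
    rw [if_neg (by omega)]

open MvPolynomial in
lemma homog_of_mul_homog {G H' : MvPolynomial (Fin 2) K} {k N : ℕ}
    (hGH : (G * H').IsHomogeneous N) (hG : G.IsHomogeneous k) (hG0 : G ≠ 0) :
    H'.IsHomogeneous (N - k) := by
  have hvan : ∀ d, d ≠ N - k ∨ ¬ k ≤ N → homogeneousComponent d H' = 0 := by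
    intro d hd
    have h1 : homogeneousComponent (k + d) (G * H') = 0 := by
      rw [MvPolynomial.homogeneousComponent_of_mem
        ((MvPolynomial.mem_homogeneousSubmodule _ _).mpr hGH)]
      rw [if_neg (by omega)]
    rw [hc_mul_homog hG] at h1
    rw [if_pos (by omega)] at h1
    have h2 : (k + d - k) = d := by omega
    rw [h2] at h1
    rcases mul_eq_zero.mp h1 with h | h
    · exact absurd h hG0
    · exact h
  by_cases hk : k ≤ N
  · have : H' = ∑ j ∈ Finset.range (H'.totalDegree + 1), homogeneousComponent j H' :=
      (MvPolynomial.sum_homogeneousComponent H').symm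
    by_cases hmem : N - k ∈ Finset.range (H'.totalDegree + 1)
    · have hH : H' = homogeneousComponent (N - k) H' := by
        conv_lhs => rw [← MvPolynomial.sum_homogeneousComponent H']
        exact Finset.sum_eq_single_of_mem _ hmem (fun j _ hne => hvan j (Or.inl hne))
      rw [hH]
      exact MvPolynomial.homogeneousComponent_isHomogeneous _ _
    · have hH : H' = 0 := by
        conv_lhs => rw [← MvPolynomial.sum_homogeneousComponent H']
        apply Finset.sum_eq_zero
        intro j hj
        apply hvan j
        left; intro hje; rw [hje] at hj; exact hmem hj
      rw [hH]; exact MvPolynomial.isHomogeneous_zero _ _ _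
  · have hH : H' = 0 := by
      conv_lhs => rw [← MvPolynomial.sum_homogeneousComponent H']
      rw [Finset.sum_eq_zero]
      intro j hj
      exact hvan j (Or.inr hk)
    rw [hH]; exact MvPolynomial.isHomogeneous_zero _ _ _

open MvPolynomial in
lemma eq_zero_of_mul_homog_lt {g τ h : MvPolynomial (Fin 2) K} {N M : ℕ}
    (hEq : h = g * τ) (hh : h.IsHomogeneous N) (hg : g.IsHomogeneous M) (hlt : N < M) :
    h = 0 := by
  have h1 : homogeneousComponent N h = h := by
    rw [MvPolynomial.homogeneousComponent_of_mem
      ((MvPolynomial.mem_homogeneousSubmodule _ _).mpr hh), if_pos rfl]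
  rw [← h1, hEq, hc_mul_homog hg, if_neg (by omega)]

open MvPolynomial in
lemma homog_aeval_linear {F : MvPolynomial (Fin 2) K} {d : ℕ} (hF : F.IsHomogeneous d)
    (v : Fin 2 → MvPolynomial (Fin 2) K) (hv : ∀ i, (v i).IsHomogeneous 1) :
    (MvPolynomial.aeval v F).IsHomogeneous d := by
  have := hF.aeval v hv
  rwa [one_mul] at this

open MvPolynomial in
lemma lf_dvd_of_homog {θ : ℝ} {F : MvPolynomial (Fin 2) K} {d : ℕ}
    (hF : F.IsHomogeneous d) (h0 : ev K θ F = 0) :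
    ∃ G, G.IsHomogeneous (d - 1) ∧ F = lf K θ * G := by
  set c : K := (Real.cos θ : K) with hc
  set s : K := (Real.sin θ : K) with hs
  have hMcs : (MvPolynomial.C c : MvPolynomial (Fin 2) K)^2 + (MvPolynomial.C s)^2 = 1 := by
    have h := hcs (K := K) θ
    rw [← MvPolynomial.C_pow, ← MvPolynomial.C_pow, ← MvPolynomial.C_add, ← hc, ← hs] at *
    rw [h, MvPolynomial.C_1]
  set ρ : MvPolynomial (Fin 2) K →ₐ[K] MvPolynomial (Fin 2) K :=
    MvPolynomial.aeval ![MvPolynomial.C c * X 0 - MvPolynomial.C s * X 1,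
      MvPolynomial.C s * X 0 + MvPolynomial.C c * X 1] with hρ
  set ρ' : MvPolynomial (Fin 2) K →ₐ[K] MvPolynomial (Fin 2) K :=
    MvPolynomial.aeval ![MvPolynomial.C c * X 0 + MvPolynomial.C s * X 1,
      - (MvPolynomial.C s) * X 0 + MvPolynomial.C c * X 1] with hρ'
  have hcompAlg : ρ'.comp ρ = AlgHom.id K _ := by
    apply MvPolynomial.algHom_ext
    intro i
    rcases fin2_cases i with rfl | rfl
    · simp only [AlgHom.comp_apply, AlgHom.id_apply, hρ, hρ', MvPolynomial.aeval_X,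
        Matrix.cons_val_zero, Matrix.cons_val_one, Matrix.head_cons, map_sub, map_add,
        map_mul, MvPolynomial.aeval_C, MvPolynomial.algebraMap_eq, map_neg]
      linear_combination (MvPolynomial.X (0 : Fin 2) : MvPolynomial (Fin 2) K) * hMcs
    · simp only [AlgHom.comp_apply, AlgHom.id_apply, hρ, hρ', MvPolynomial.aeval_X,
        Matrix.cons_val_zero, Matrix.cons_val_one, Matrix.head_cons, map_sub, map_add,
        map_mul, MvPolynomial.aeval_C, MvPolynomial.algebraMap_eq, map_neg]
      linear_combination (MvPolynomial.X (1 : Fin 2) : MvPolynomial (Fin 2) K) * hMcs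
  have hcomp : ∀ p, ρ' (ρ p) = p := fun p => by
    have := AlgHom.congr_fun hcompAlg p
    simpa using this
  have hent : ∀ i, ((![MvPolynomial.C c * X 0 - MvPolynomial.C s * X 1,
      MvPolynomial.C s * X 0 + MvPolynomial.C c * X 1] : Fin 2 → MvPolynomial (Fin 2) K) i).IsHomogeneous 1 := by
    intro i
    rcases fin2_cases i with rfl | rfl
    · simpa using (MvPolynomial.isHomogeneous_C_mul_X c (0:Fin 2)).sub
        (MvPolynomial.isHomogeneous_C_mul_X s (1:Fin 2))
    · simpa using (MvPolynomial.isHomogeneous_C_mul_X s (0:Fin 2)).add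
        (MvPolynomial.isHomogeneous_C_mul_X c (1:Fin 2))
  have hent' : ∀ i, ((![MvPolynomial.C c * X 0 + MvPolynomial.C s * X 1,
      - (MvPolynomial.C s) * X 0 + MvPolynomial.C c * X 1] : Fin 2 → MvPolynomial (Fin 2) K) i).IsHomogeneous 1 := by
    intro i
    rcases fin2_cases i with rfl | rfl
    · simpa using (MvPolynomial.isHomogeneous_C_mul_X c (0:Fin 2)).add
        (MvPolynomial.isHomogeneous_C_mul_X s (1:Fin 2))
    · have : (- (MvPolynomial.C s) * X 0 + MvPolynomial.C c * X 1 : MvPolynomial (Fin 2) K)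
          = MvPolynomial.C c * X 1 - MvPolynomial.C s * X 0 := by ring
      simp only [Matrix.cons_val_one, Matrix.head_cons]
      rw [this]
      exact (MvPolynomial.isHomogeneous_C_mul_X c (1:Fin 2)).sub
        (MvPolynomial.isHomogeneous_C_mul_X s (0:Fin 2))
  have hρF : (ρ F).IsHomogeneous d := homog_aeval_linear hF _ hent
  have hev1 : MvPolynomial.aeval ![(1:K), 0] (ρ F) = 0 := by
    rw [hρ, MvPolynomial.comp_aeval_apply]
    have heq : (fun i => MvPolynomial.aeval ![(1:K), 0]
        ((![MvPolynomial.C c * X 0 - MvPolynomial.C s * X 1,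
          MvPolynomial.C s * X 0 + MvPolynomial.C c * X 1] : Fin 2 → MvPolynomial (Fin 2) K) i))
        = ![c, s] := by
      funext i
      rcases fin2_cases i with rfl | rfl <;> simp
    rw [heq]
    exact h0
  obtain ⟨G', hG'⟩ := X1_dvd_of_homog hρF hev1
  have hG'h : G'.IsHomogeneous (d - 1) :=
    homog_of_mul_homog (hG' ▸ hρF) (MvPolynomial.isHomogeneous_X _ 1)
      (MvPolynomial.X_ne_zero 1)
  refine ⟨ρ' G', homog_aeval_linear hG'h _ hent', ?_⟩
  have hF' : F = ρ' (ρ F) := (hcomp F).symm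
  rw [hF', hG', map_mul]
  have hX1 : ρ' (X 1) = lf K θ := by
    rw [hρ', MvPolynomial.aeval_X]
    simp only [Matrix.cons_val_one, Matrix.head_cons, Matrix.cons_val_fin_one, lf, ← hc, ← hs]
    ring
  rw [hX1]


lemma liftTang_add {i : ℕ} {θ : ℝ} {ξ ζ : MvPolynomial (Fin 2) K × MvPolynomial (Fin 2) K}
    (hξ : LiftTang K i θ ξ) (hζ : LiftTang K i θ ζ) : LiftTang K i θ (ξ + ζ) := by
  obtain ⟨η₁, h11, h12⟩ := hξ
  obtain ⟨η₂, h21, h22⟩ := hζ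
  refine ⟨η₁ + η₂, ?_, ?_⟩
  · have : cuspEval K θ (ξ + ζ).1 - (η₁ + η₂) * dcusp1 K θ
        = (cuspEval K θ ξ.1 - η₁ * dcusp1 K θ) + (cuspEval K θ ζ.1 - η₂ * dcusp1 K θ) := by
      show cuspEval K θ (ξ.1 + ζ.1) - _ = _
      simp only [cuspEval, map_add]
      ring
    rw [this]
    exact dvd_add h11 h21
  · have : cuspEval K θ (ξ + ζ).2 - (η₁ + η₂) * dcusp2 K θ
        = (cuspEval K θ ξ.2 - η₁ * dcusp2 K θ) + (cuspEval K θ ζ.2 - η₂ * dcusp2 K θ) := by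
      show cuspEval K θ (ξ.2 + ζ.2) - _ = _
      simp only [cuspEval, map_add]
      ring
    rw [this]
    exact dvd_add h12 h22

lemma liftTang_smul {i : ℕ} {θ : ℝ} {ξ : MvPolynomial (Fin 2) K × MvPolynomial (Fin 2) K}
    (a : K) (hξ : LiftTang K i θ ξ) : LiftTang K i θ (a • ξ) := by
  obtain ⟨η, h1, h2⟩ := hξ
  refine ⟨C a * η, ?_, ?_⟩
  · have : cuspEval K θ (a • ξ).1 - C a * η * dcusp1 K θ
        = C a * (cuspEval K θ ξ.1 - η * dcusp1 K θ) := by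
      show cuspEval K θ (a • ξ.1) - _ = _
      simp only [cuspEval, MvPolynomial.smul_eq_C_mul, map_mul]
      have haC : (MvPolynomial.aeval ![cusp1 K θ, cusp2 K θ]) (MvPolynomial.C a) = C a := by
        simp [MvPolynomial.aeval_C, Polynomial.algebraMap_eq]
      rw [haC]; ring
    rw [this]
    exact h1.mul_left _
  · have : cuspEval K θ (a • ξ).2 - C a * η * dcusp2 K θ
        = C a * (cuspEval K θ ξ.2 - η * dcusp2 K θ) := by
      show cuspEval K θ (a • ξ.2) - _ = _
      simp only [cuspEval, MvPolynomial.smul_eq_C_mul, map_mul]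
      have haC : (MvPolynomial.aeval ![cusp1 K θ, cusp2 K θ]) (MvPolynomial.C a) = C a := by
        simp [MvPolynomial.aeval_C, Polynomial.algebraMap_eq]
      rw [haC]; ring
    rw [this]
    exact h2.mul_left _

lemma liftTang_dvd_E {θ : ℝ} {P Q : MvPolynomial (Fin 2) K} {M : ℕ}
    (hP : P.IsHomogeneous M) (hQ : Q.IsHomogeneous M) (hl : LiftTang K M θ (P, Q)) :
    (X : Polynomial K)^2 ∣
      (ae K θ P * (2 * C ((Real.sin θ : K)) + 3 * C ((Real.cos θ : K)) * X)
       - ae K θ Q * (2 * C ((Real.cos θ : K)) - 3 * C ((Real.sin θ : K)) * X)) := by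
  obtain ⟨η, hd1, hd2⟩ := hl
  set u1 : Polynomial K := 2 * C ((Real.sin θ : K)) + 3 * C ((Real.cos θ : K)) * X with hu1
  set u2 : Polynomial K := 2 * C ((Real.cos θ : K)) - 3 * C ((Real.sin θ : K)) * X with hu2
  have h3 : (X : Polynomial K)^(2*M+2) ∣
      ((cuspEval K θ P - η * dcusp1 K θ) * u1 - (cuspEval K θ Q - η * dcusp2 K θ) * u2) :=
    dvd_sub (hd1.mul_right u1) (hd2.mul_right u2)
  have he : ((cuspEval K θ P - η * dcusp1 K θ) * u1 - (cuspEval K θ Q - η * dcusp2 K θ) * u2)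
      = X^(2*M) * (ae K θ P * u1 - ae K θ Q * u2) := by
    rw [cuspEval_homog θ hP, cuspEval_homog θ hQ]
    simp only [dcusp1, dcusp2, hu1, hu2]
    ring
  rw [he] at h3
  have hx : (X : Polynomial K)^(2*M) ≠ 0 := pow_ne_zero _ Polynomial.X_ne_zero
  have h4 : (X : Polynomial K)^(2*M) * X^2 ∣ X^(2*M) * (ae K θ P * u1 - ae K θ Q * u2) := by
    rw [← pow_add]
    exact h3
  exact (mul_dvd_mul_iff_left hx).mp h4

lemma ev_np_eq_zero {θ : ℝ} {P Q : MvPolynomial (Fin 2) K} {M : ℕ}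
    (hP : P.IsHomogeneous M) (hQ : Q.IsHomogeneous M) (hl : LiftTang K M θ (P, Q)) :
    ev K θ (MvPolynomial.X 0 * Q - MvPolynomial.X 1 * P) = 0 := by
  have hdvd := liftTang_dvd_E hP hQ hl
  have hX : (X : Polynomial K) ∣ _ := dvd_trans (dvd_pow_self X two_ne_zero) hdvd
  have h0 := Polynomial.X_dvd_iff.mp hX
  rw [Polynomial.coeff_zero_eq_eval_zero] at h0
  simp only [eval_sub, eval_mul, eval_add, eval_ofNat, eval_C, eval_X, mul_zero, add_zero,
    sub_zero, ae_eval0] at h0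
  have hev : ev K θ (MvPolynomial.X 0 * Q - MvPolynomial.X 1 * P)
      = (Real.cos θ : K) * ev K θ Q - (Real.sin θ : K) * ev K θ P := by
    rw [map_sub, map_mul, map_mul]
    have h1 : ev K θ (MvPolynomial.X 0) = (Real.cos θ : K) := by simp [ev]
    have h2 : ev K θ (MvPolynomial.X 1) = (Real.sin θ : K) := by simp [ev]
    rw [h1, h2]
  rw [hev]
  linear_combination - h0 / 2

lemma radial_ev_zero {θ : ℝ} {h : MvPolynomial (Fin 2) K} {M : ℕ}
    (hh : h.IsHomogeneous M)
    (hl : LiftTang K (M + 1) θ (MvPolynomial.X 0 * h, MvPolynomial.X 1 * h)) :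
    ev K θ h = 0 := by
  have hP : (MvPolynomial.X 0 * h).IsHomogeneous (M + 1) :=
    (add_comm 1 M) ▸ ((MvPolynomial.isHomogeneous_X _ _).mul hh)
  have hQ : (MvPolynomial.X 1 * h).IsHomogeneous (M + 1) :=
    (add_comm 1 M) ▸ ((MvPolynomial.isHomogeneous_X _ _).mul hh)
  have hdvd := liftTang_dvd_E hP hQ hl
  rw [map_mul, map_mul, ae_X0, ae_X1] at hdvd
  have hE : rpoly K θ * ae K θ h * (2 * C ((Real.sin θ : K)) + 3 * C ((Real.cos θ : K)) * X)
      - spoly K θ * ae K θ h * (2 * C ((Real.cos θ : K)) - 3 * C ((Real.sin θ : K)) * X)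
      = X * ae K θ h := by
    simp only [rpoly, spoly]
    linear_combination (X * ae K θ h) * (C_hcs (K := K) θ)
  rw [hE] at hdvd
  have hXd : (X : Polynomial K) ∣ ae K θ h := by
    have h4 : (X : Polynomial K) * X ∣ X * ae K θ h := by rw [← sq]; exact hdvd
    exact (mul_dvd_mul_iff_left (Polynomial.X_ne_zero)).mp h4
  have h0 := Polynomial.X_dvd_iff.mp hXd
  rw [Polynomial.coeff_zero_eq_eval_zero, ae_eval0] at h0
  exact h0

lemma prod_lf_dvd {M : ℕ} {φ : Fin M → ℝ} (hφ : Admissible φ)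
    {F : MvPolynomial (Fin 2) K} {d : ℕ} (hF : F.IsHomogeneous d)
    (t : Finset (Fin M)) (hev : ∀ k ∈ t, ev K (φ k) F = 0) :
    ∃ G, G.IsHomogeneous (d - t.card) ∧ F = (∏ k ∈ t, lf K (φ k)) * G := by
  induction t using Finset.induction_on with
  | empty => exact ⟨F, by simpa using hF, by simp⟩
  | @insert a t ha ih =>
    obtain ⟨G, hGh, hGeq⟩ := ih (fun k hk => hev k (Finset.mem_insert_of_mem hk))
    have heva : ev K (φ a) F = 0 := hev a (Finset.mem_insert_self a t)
    have hprodne : ev K (φ a) (∏ k ∈ t, lf K (φ k)) ≠ 0 := by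
      rw [map_prod]
      apply Finset.prod_ne_zero_iff.mpr
      intro k hk
      rw [ev_lf]
      rw [RCLike.ofReal_ne_zero]
      intro hzero
      obtain ⟨nz, hn⟩ := Real.sin_eq_zero_iff.mp hzero
      exact hφ a k (fun hak => ha (hak ▸ hk)) nz hn.symm
    have hevG : ev K (φ a) G = 0 := by
      rw [hGeq, map_mul] at heva
      rcases mul_eq_zero.mp heva with hbad | hok
      · exact absurd hbad hprodne
      · exact hok
    obtain ⟨G', hG'h, hG'eq⟩ := lf_dvd_of_homog hGh hevG
    refine ⟨G', ?_, ?_⟩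
    · have : d - t.card - 1 = d - (insert a t).card := by
        rw [Finset.card_insert_of_notMem ha]; omega
      exact this ▸ hG'h
    · rw [Finset.prod_insert ha, hGeq, hG'eq]
      ring

lemma lf_ne_zero (θ : ℝ) : lf K θ ≠ 0 := by
  intro h
  have h1 : MvPolynomial.aeval ![(1:K), 0] (lf K θ) = - (Real.sin θ : K) := by
    simp [lf]
  have h2 : MvPolynomial.aeval ![(0:K), 1] (lf K θ) = (Real.cos θ : K) := by
    simp [lf]
  rw [h, map_zero] at h1 h2
  have := hcs (K := K) θ
  rw [← h2, neg_eq_zero.mp h1.symm] at this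
  simp at this

open MvPolynomial in
lemma homog_one_eq {lam : MvPolynomial (Fin 2) K} (h : lam.IsHomogeneous 1) :
    lam = MvPolynomial.C (lam.coeff (Finsupp.single 0 1)) * X 0
        + MvPolynomial.C (lam.coeff (Finsupp.single 1 1)) * X 1 := by
  have hsub : lam.support ⊆ {Finsupp.single 0 1, Finsupp.single 1 1} := by
    intro u hu
    have hd := support_degree h hu
    simp only [Finset.mem_insert, Finset.mem_singleton]
    by_cases h1 : u 1 = 0
    · left; exact eq_single_of_homog h hu h1
    · right
      apply eq_single_of_homog' h hu
      omega
  have hne : (Finsupp.single (0 : Fin 2) (1:ℕ)) ≠ Finsupp.single 1 1 := by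
    intro hcon
    have := DFunLike.congr_fun hcon (0 : Fin 2)
    simp [Finsupp.single_apply] at this
  conv_lhs => rw [lam.as_sum]
  rw [Finset.sum_subset hsub (by
    intro u _ hu
    rw [MvPolynomial.notMem_support_iff.mp hu, map_zero])]
  rw [Finset.sum_insert (by simpa using hne), Finset.sum_singleton]
  congr 1
  · rw [MvPolynomial.X, MvPolynomial.C_mul_monomial, mul_one]
  · rw [MvPolynomial.X, MvPolynomial.C_mul_monomial, mul_one]

open MvPolynomial in
theorem main_thm (m : ℕ) (hm : 1 ≤ m)
    (φ : Fin m → ℝ) (hφ : Admissible φ) :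
    ∃ ξ₁ ξ₂ : MvPolynomial (Fin 2) K × MvPolynomial (Fin 2) K,
      (ξ₁ ∈ Vsp K m ∧ ∀ k, LiftTang K m (φ k) ξ₁) ∧
      (ξ₂ ∈ Vsp K m ∧ ∀ k, LiftTang K m (φ k) ξ₂) ∧
      LinearIndependent K ![ξ₁, ξ₂] ∧
      ∀ ξ : MvPolynomial (Fin 2) K × MvPolynomial (Fin 2) K,
        ξ ∈ Vsp K m → (∀ k, LiftTang K m (φ k) ξ) →
        ∃ a b : K, ξ = a • ξ₁ + b • ξ₂ := by
  obtain ⟨n, rfl⟩ : ∃ n, m = n + 1 := ⟨m - 1, (Nat.succ_pred_eq_of_pos hm).symm⟩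
  set g : MvPolynomial (Fin 2) K := ∏ k, lf K (φ k) with hg
  have hgh : g.IsHomogeneous (n + 1) := by
    have h1 := MvPolynomial.IsHomogeneous.prod Finset.univ (fun k => lf K (φ k)) (fun _ => 1)
      (fun k _ => lf_isHomogeneous (φ k))
    have h2 : (∑ _i : Fin (n+1), 1) = n + 1 := by simp
    rwa [h2] at h1
  have hgne : g ≠ 0 := Finset.prod_ne_zero_iff.mpr (fun k _ => lf_ne_zero (φ k))
  have hdecomp : ∀ k : Fin (n+1), g = lf K (φ k) * ∏ j ∈ Finset.univ.erase k, lf K (φ j) :=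
    fun k => (Finset.mul_prod_erase Finset.univ _ (Finset.mem_univ k)).symm
  have hhk : ∀ k : Fin (n+1), (∏ j ∈ Finset.univ.erase k, lf K (φ j)).IsHomogeneous n := by
    intro k
    have h1 := MvPolynomial.IsHomogeneous.prod (Finset.univ.erase k) (fun j => lf K (φ j))
      (fun _ => 1) (fun j _ => lf_isHomogeneous (φ j))
    have h2 : (∑ _j ∈ Finset.univ.erase k, 1) = n := by
      rw [Finset.sum_const, smul_eq_mul, mul_one, Finset.card_erase_of_mem (Finset.mem_univ k)]
      simp
    rwa [h2] at h1
  have hz1 : ∀ k, LiftTang K (n+1) (φ k) (zeta1 K g) := by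
    intro k
    rw [hdecomp k]
    exact liftTang_zeta1 (φ k) (hhk k)
  have hz2 : ∀ k, LiftTang K (n+1) (φ k) (zeta2 K g) := by
    intro k
    rw [hdecomp k]
    exact liftTang_zeta2 (φ k) (hhk k)
  have h2ne : (2 : MvPolynomial (Fin 2) K) ≠ 0 := by
    intro hcon
    have h := congrArg (MvPolynomial.aeval ![(0:K), 0]) hcon
    simp only [map_ofNat, map_zero] at h
    norm_num at h
  refine ⟨zeta1 K g, zeta2 K g, ⟨zeta1_mem hgh, hz1⟩, ⟨zeta2_mem hgh, hz2⟩, ?_, ?_⟩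
  · -- linear independence
    rw [LinearIndependent.pair_iff]
    intro a b hab
    have h1 : a • (zeta1 K g).1 + b • (zeta2 K g).1 = 0 := by
      have := congrArg Prod.fst hab
      simpa using this
    have h2 : a • (zeta1 K g).2 + b • (zeta2 K g).2 = 0 := by
      have := congrArg Prod.snd hab
      simpa using this
    have hzero : (MvPolynomial.C a * X 1 - MvPolynomial.C b * X 0) * (2 * g) = 0 := by
      simp only [zeta1, zeta2, MvPolynomial.smul_eq_C_mul] at h1 h2
      linear_combination (X 1 : MvPolynomial (Fin 2) K) * h1 - (X 0 : MvPolynomial (Fin 2) K) * h2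
    rcases mul_eq_zero.mp hzero with hlin | hbad
    · constructor
      · have := congrArg (MvPolynomial.aeval ![(0:K), 1]) hlin
        simpa [MvPolynomial.algebraMap_eq] using this
      · have := congrArg (MvPolynomial.aeval ![(1:K), 0]) hlin
        have h3 : -b = 0 := by simpa [MvPolynomial.algebraMap_eq] using this
        exact neg_eq_zero.mp h3
    · exact absurd hbad (mul_ne_zero h2ne hgne)
  · -- spanning
    intro ξ hmem hl
    have hPmem := hmem.1
    have hQmem := hmem.2
    have hP : ξ.1.IsHomogeneous (n+1) := (MvPolynomial.mem_homogeneousSubmodule _ _).mp hPmem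
    have hQ : ξ.2.IsHomogeneous (n+1) := (MvPolynomial.mem_homogeneousSubmodule _ _).mp hQmem
    have hnph : (X 0 * ξ.2 - X 1 * ξ.1).IsHomogeneous (n+2) := by
      have hx2 : (X 0 * ξ.2).IsHomogeneous (n+2) :=
        (show 1 + (n+1) = n+2 by omega) ▸ ((MvPolynomial.isHomogeneous_X _ _).mul hQ)
      have hx1 : (X 1 * ξ.1).IsHomogeneous (n+2) :=
        (show 1 + (n+1) = n+2 by omega) ▸ ((MvPolynomial.isHomogeneous_X _ _).mul hP)
      exact hx2.sub hx1
    have hevnp : ∀ k, ev K (φ k) (X 0 * ξ.2 - X 1 * ξ.1) = 0 :=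
      fun k => ev_np_eq_zero hP hQ (hl k)
    obtain ⟨lam, hlamh, hlameq⟩ := prod_lf_dvd hφ hnph Finset.univ (fun k _ => hevnp k)
    have hcardU : (Finset.univ : Finset (Fin (n+1))).card = n + 1 := by simp
    rw [hcardU, show n + 2 - (n+1) = 1 by omega] at hlamh
    set a : K := lam.coeff (Finsupp.single 0 1) with ha
    set b : K := lam.coeff (Finsupp.single 1 1) with hb
    have hlam : lam = MvPolynomial.C a * X 0 + MvPolynomial.C b * X 1 := homog_one_eq hlamh
    rw [hlam] at hlameq
    -- the corrected element
    set ξ' := (2:K) • ξ + b • zeta1 K g + (-a) • zeta2 K g with hxi'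
    have hmem' : ξ' ∈ Vsp K (n+1) := by
      apply Submodule.add_mem
      · apply Submodule.add_mem
        · exact Submodule.smul_mem _ _ hmem
        · exact Submodule.smul_mem _ _ (zeta1_mem hgh)
      · exact Submodule.smul_mem _ _ (zeta2_mem hgh)
    obtain ⟨hP'mem, hQ'mem⟩ := hmem'
    have hP' : ξ'.1.IsHomogeneous (n+1) := (MvPolynomial.mem_homogeneousSubmodule _ _).mp hP'mem
    have hl' : ∀ k, LiftTang K (n+1) (φ k) ξ' := fun k =>
      liftTang_add (liftTang_add (liftTang_smul 2 (hl k)) (liftTang_smul b (hz1 k)))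
        (liftTang_smul (-a) (hz2 k))
    have hzero : X 0 * ξ'.2 - X 1 * ξ'.1 = 0 := by
      simp only [hxi', Prod.fst_add, Prod.snd_add, Prod.smul_fst, Prod.smul_snd, zeta1, zeta2,
        MvPolynomial.smul_eq_C_mul, map_neg, map_ofNat]
      linear_combination (2 : MvPolynomial (Fin 2) K) * hlameq
    have hq : X 0 * ξ'.2 = X 1 * ξ'.1 := sub_eq_zero.mp hzero
    have hev01 : MvPolynomial.aeval ![(0:K), 1] ξ'.1 = 0 := by
      have hc := congrArg (MvPolynomial.aeval ![(0:K), 1]) hq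
      rw [map_mul, map_mul] at hc
      simpa using hc.symm
    obtain ⟨h', hh'eq⟩ := X0_dvd_of_homog hP' hev01
    have hQeq : ξ'.2 = X 1 * h' := by
      have hcc : X 0 * ξ'.2 = X 0 * (X 1 * h') := by
        rw [hq, hh'eq]; ring
      exact mul_left_cancel₀ (MvPolynomial.X_ne_zero 0) hcc
    have hh'h : h'.IsHomogeneous n := by
      have := homog_of_mul_homog (hh'eq ▸ hP') (MvPolynomial.isHomogeneous_X _ 0)
        (MvPolynomial.X_ne_zero 0)
      simpa using this
    have hradial : ∀ k, ev K (φ k) h' = 0 := by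
      intro k
      apply radial_ev_zero hh'h
      have hpair : (MvPolynomial.X 0 * h', MvPolynomial.X 1 * h') = ξ' :=
        Prod.ext_iff.mpr ⟨hh'eq.symm, hQeq.symm⟩
      rw [hpair]
      exact hl' k
    obtain ⟨τ, hτh, hτeq⟩ := prod_lf_dvd hφ hh'h Finset.univ (fun k _ => hradial k)
    have hzero' : h' = 0 := eq_zero_of_mul_homog_lt hτeq hh'h hgh (by omega)
    have hxi0 : ξ' = 0 := by
      apply Prod.ext_iff.mpr
      constructor
      · rw [hh'eq, hzero', mul_zero]; rfl
      · rw [hQeq, hzero', mul_zero]; rfl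
    refine ⟨-b/2, a/2, ?_⟩
    have h4 : (2:K) • ξ + b • zeta1 K g = -((-a) • zeta2 K g) :=
      eq_neg_of_add_eq_zero_left (hxi' ▸ hxi0)
    have h5 : (2:K) • ξ = -((-a) • zeta2 K g) - b • zeta1 K g := eq_sub_of_add_eq h4
    calc ξ = ((1:K)/2) • ((2:K) • ξ) := by rw [smul_smul]; norm_num
      _ = ((1:K)/2) • (-((-a) • zeta2 K g) - b • zeta1 K g) := by rw [h5]
      _ = (-b/2) • zeta1 K g + (a/2) • zeta2 K g := by module

end KSM

/-- Lemma 1 of the paper: for an admissible family `φ₁, …, φ_m` (`m ≥ 1`), the subspace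
of `V_m` of elements that are `m`-liftably tangent to every `c_{φ_k}` has `K`-dimension
exactly `2`: it contains two linearly independent elements that span it. -/
theorem kernel_of_removed_branch_KSM_dim_two (K : Type*) [RCLike K] (m : ℕ) (hm : 1 ≤ m)
    (φ : Fin m → ℝ) (hφ : Admissible φ) :
    ∃ ξ₁ ξ₂ : MvPolynomial (Fin 2) K × MvPolynomial (Fin 2) K,
      (ξ₁ ∈ Vsp K m ∧ ∀ k, LiftTang K m (φ k) ξ₁) ∧
      (ξ₂ ∈ Vsp K m ∧ ∀ k, LiftTang K m (φ k) ξ₂) ∧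
      LinearIndependent K ![ξ₁, ξ₂] ∧
      ∀ ξ : MvPolynomial (Fin 2) K × MvPolynomial (Fin 2) K,
        ξ ∈ Vsp K m → (∀ k, LiftTang K m (φ k) ξ) →
        ∃ a b : K, ξ = a • ξ₁ + b • ξ₂ := by
  exact KSM.main_thm m hm φ hφ
end

section
/- The pair of linear vector fields (2X, 3Y) and (2Y, 0) is a basis of the subspace {ξ ∈ V₁ : ξ is 1-liftably tangent to c₀}, where c₀(x) = (x², x³) is the standard cusp. Equivalently, a linear vector field ξ = (aX + bY, cX + dY) on K² admits a polynomial η ∈ K[x] with x⁴ dividing both a x² + b x³ − 2x·η(x) and c x² + d x³ − 3x²·η(x) if and only if c = 0 and 2d = 3a. -/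
open Polynomial

open Polynomial in
lemma fin2_degree (d : Fin 2 →₀ ℕ) : d.degree = d 0 + d 1 := by
  rw [Finsupp.degree_apply, Finset.sum_subset (Finset.subset_univ _)
    (fun i _ hi => Finsupp.notMem_support_iff.mp hi), Fin.sum_univ_two]

open MvPolynomial in
lemma homog1 {K : Type*} [RCLike K] (p : MvPolynomial (Fin 2) K) (hp : p.IsHomogeneous 1) :
    p = MvPolynomial.C (coeff (Finsupp.single 0 1) p) * X 0 +
      MvPolynomial.C (coeff (Finsupp.single 1 1) p) * X 1 := by
  apply MvPolynomial.ext
  intro d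
  rw [MvPolynomial.coeff_add, MvPolynomial.coeff_C_mul, MvPolynomial.coeff_C_mul,
    MvPolynomial.coeff_X', MvPolynomial.coeff_X']
  by_cases h0 : d = Finsupp.single 0 1
  · subst h0
    simp [Finsupp.single_eq_single_iff]
  by_cases h1 : d = Finsupp.single 1 1
  · subst h1
    simp [Finsupp.single_eq_single_iff]
  · rw [if_neg (fun h => h0 h.symm), if_neg (fun h => h1 h.symm)]
    rw [hp.coeff_eq_zero]
    · ring
    · rw [fin2_degree]
      intro hd
      rcases (by omega : d 0 = 1 ∧ d 1 = 0 ∨ d 0 = 0 ∧ d 1 = 1) with ⟨ha, hb⟩ | ⟨ha, hb⟩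
      · exact h0 (Finsupp.ext fun i => by fin_cases i <;> simp [Finsupp.single_apply, ha, hb])
      · exact h1 (Finsupp.ext fun i => by fin_cases i <;> simp [Finsupp.single_apply, ha, hb])

open Polynomial

lemma twoC {K : Type*} [RCLike K] : (2 : K[X]) = C (2 : K) :=
  (map_ofNat C 2).symm

lemma threeC {K : Type*} [RCLike K] : (3 : K[X]) = C (3 : K) :=
  (map_ofNat C 3).symm

lemma key {K : Type*} [RCLike K] (a b c d : K) :
    (∃ η : Polynomial K,
        (X : K[X]) ^ 4 ∣ C a * X ^ 2 + C b * X ^ 3 - 2 * X * η ∧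
        (X : K[X]) ^ 4 ∣ C c * X ^ 2 + C d * X ^ 3 - 3 * X ^ 2 * η) ↔
      c = 0 ∧ 2 * d = 3 * a := by
  constructor
  · rintro ⟨η, h1, h2⟩
    rw [X_pow_dvd_iff] at h1 h2
    have e1 := h1 2 (by norm_num)
    have e2 := h2 2 (by norm_num)
    have e3 := h2 3 (by norm_num)
    have e0 := h1 1 (by norm_num)
    simp [coeff_sub, coeff_add, coeff_C_mul, coeff_X_pow, twoC, threeC,
      mul_assoc, coeff_X_mul, pow_two, coeff_X_pow_mul, coeff_X] at e0 e1 e2 e3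
    have hc : c = 0 := by linear_combination e2 + 3 * e0
    refine ⟨hc, ?_⟩
    linear_combination 2 * e3 - 3 * e1
  · rintro ⟨rfl, hd⟩
    have ha : 2 * (a/2) = a := by rw [mul_comm]; exact div_mul_cancel₀ a two_ne_zero
    have hb : 2 * (b/2) = b := by rw [mul_comm]; exact div_mul_cancel₀ b two_ne_zero
    have hd2 : 3 * (a/2) = d := by linear_combination (-(1:K)/2) * hd
    refine ⟨C (a/2) * X + C (b/2) * X ^ 2, ⟨0, ?_⟩, ⟨-(3 * C (b/2)), ?_⟩⟩
    · rw [← ha, ← hb]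
      simp only [C_mul, ← twoC]
      ring
    · rw [← hd2]
      simp only [C_mul, ← twoC, ← threeC, map_zero]
      ring

section Aux

variable {K : Type*} [RCLike K]

lemma hc1 : cusp1 K 0 = X ^ 2 := by simp [cusp1]
lemma hc2 : cusp2 K 0 = X ^ 3 := by simp [cusp2]
lemma hd1 : dcusp1 K 0 = 2 * X := by simp [dcusp1]
lemma hd2 : dcusp2 K 0 = 3 * X ^ 2 := by simp [dcusp2]

lemma cuspEval_lin (a b : K) :
    cuspEval K 0 (MvPolynomial.C a * MvPolynomial.X 0 + MvPolynomial.C b * MvPolynomial.X 1)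
      = C a * X ^ 2 + C b * X ^ 3 := by
  simp [cuspEval, hc1, hc2, algebraMap_eq]

lemma mv2C : (2 : MvPolynomial (Fin 2) K) = MvPolynomial.C 2 :=
  (map_ofNat MvPolynomial.C 2).symm

lemma mv3C : (3 : MvPolynomial (Fin 2) K) = MvPolynomial.C 3 :=
  (map_ofNat MvPolynomial.C 3).symm

lemma h2X (i : Fin 2) : ((2 : MvPolynomial (Fin 2) K) * MvPolynomial.X i).IsHomogeneous 1 := by
  rw [mv2C]
  simpa using (MvPolynomial.isHomogeneous_C (Fin 2) (2 : K)).mul (MvPolynomial.isHomogeneous_X K i)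

lemma h3X (i : Fin 2) : ((3 : MvPolynomial (Fin 2) K) * MvPolynomial.X i).IsHomogeneous 1 := by
  rw [mv3C]
  simpa using (MvPolynomial.isHomogeneous_C (Fin 2) (3 : K)).mul (MvPolynomial.isHomogeneous_X K i)

end Aux


open MvPolynomial in
/-- The linear vector fields `(2X, 3Y)` and `(2Y, 0)` form a basis of
`{ξ ∈ V₁ : ξ is 1-liftably tangent to the standard cusp c₀}`; equivalently, a linear
vector field `(aX + bY, cX + dY)` lies in this kernel iff `c = 0` and `2d = 3a`. -/
theorem basis_of_kernel_for_standard_cusp (K : Type*) [RCLike K] :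
    ((((2 : MvPolynomial (Fin 2) K) * X 0, (3 : MvPolynomial (Fin 2) K) * X 1) ∈ Vsp K 1 ∧
        LiftTang K 1 0 ((2 : MvPolynomial (Fin 2) K) * X 0, 3 * X 1)) ∧
      (((2 : MvPolynomial (Fin 2) K) * X 1, (0 : MvPolynomial (Fin 2) K)) ∈ Vsp K 1 ∧
        LiftTang K 1 0 ((2 : MvPolynomial (Fin 2) K) * X 1, 0)) ∧
      LinearIndependent K
        ![(((2 : MvPolynomial (Fin 2) K) * X 0, (3 : MvPolynomial (Fin 2) K) * X 1)),
          (((2 : MvPolynomial (Fin 2) K) * X 1, (0 : MvPolynomial (Fin 2) K)))] ∧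
      ∀ ξ : MvPolynomial (Fin 2) K × MvPolynomial (Fin 2) K,
        ξ ∈ Vsp K 1 → LiftTang K 1 0 ξ →
        ∃ s t : K, ξ = s • ((2 : MvPolynomial (Fin 2) K) * X 0, (3 : MvPolynomial (Fin 2) K) * X 1)
          + t • ((2 : MvPolynomial (Fin 2) K) * X 1, (0 : MvPolynomial (Fin 2) K))) ∧
    ∀ a b c d : K,
      (∃ η : Polynomial K,
        (Polynomial.X : Polynomial K) ^ 4 ∣
          Polynomial.C a * Polynomial.X ^ 2 + Polynomial.C b * Polynomial.X ^ 3
            - 2 * Polynomial.X * η ∧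
        (Polynomial.X : Polynomial K) ^ 4 ∣
          Polynomial.C c * Polynomial.X ^ 2 + Polynomial.C d * Polynomial.X ^ 3
            - 3 * Polynomial.X ^ 2 * η) ↔
      c = 0 ∧ 2 * d = 3 * a := by
  refine ⟨⟨⟨?_, ?_⟩, ⟨?_, ?_⟩, ?_, ?_⟩, fun a b c d => key a b c d⟩
  · exact Submodule.mem_prod.mpr ⟨(mem_homogeneousSubmodule _ _).mpr (h2X 0),
      (mem_homogeneousSubmodule _ _).mpr (h3X 1)⟩
  · refine ⟨Polynomial.X, ⟨0, ?_⟩, ⟨0, ?_⟩⟩ <;>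
      · simp [cuspEval, hc1, hc2, hd1, hd2]
        ring
  · exact Submodule.mem_prod.mpr ⟨(mem_homogeneousSubmodule _ _).mpr (h2X 1),
      Submodule.zero_mem _⟩
  · refine ⟨Polynomial.X ^ 2, ⟨0, ?_⟩, ⟨-3, ?_⟩⟩ <;>
      · simp [cuspEval, hc1, hc2, hd1, hd2]
        ring
  · rw [linearIndependent_fin2]
    constructor
    · intro h
      have h1 := congrArg (fun v => MvPolynomial.eval ![(0 : K), 1] v.1) h
      simp at h1
    · intro s h
      have h1 := congrArg (fun v => MvPolynomial.eval ![(0 : K), 1] v.2) h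
      simp at h1
  · intro ξ hmem hlift
    obtain ⟨hm1, hm2⟩ := Submodule.mem_prod.mp hmem
    have H1 := homog1 ξ.1 ((mem_homogeneousSubmodule _ _).mp hm1)
    have H2 := homog1 ξ.2 ((mem_homogeneousSubmodule _ _).mp hm2)
    set a := coeff (Finsupp.single 0 1) ξ.1 with ha_def
    set b := coeff (Finsupp.single 1 1) ξ.1 with hb_def
    set c := coeff (Finsupp.single 0 1) ξ.2 with hc_def
    set d := coeff (Finsupp.single 1 1) ξ.2 with hd_def
    obtain ⟨η, l1, l2⟩ := hlift
    rw [H1, cuspEval_lin, hd1, mul_comm η] at l1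
    rw [H2, cuspEval_lin, hd2, mul_comm η] at l2
    norm_num at l1 l2
    obtain ⟨hc0, hda⟩ := (key a b c d).mp ⟨η, l1, l2⟩
    refine ⟨a / 2, b / 2, ?_⟩
    have ca : MvPolynomial.C a = MvPolynomial.C (a / 2) * (2 : MvPolynomial (Fin 2) K) := by
      rw [mv2C, ← map_mul]
      congr 1
      exact (div_mul_cancel₀ a two_ne_zero).symm
    have cb : MvPolynomial.C b = MvPolynomial.C (b / 2) * (2 : MvPolynomial (Fin 2) K) := by
      rw [mv2C, ← map_mul]
      congr 1
      exact (div_mul_cancel₀ b two_ne_zero).symm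
    have cd : MvPolynomial.C d = MvPolynomial.C (a / 2) * (3 : MvPolynomial (Fin 2) K) := by
      rw [mv3C, ← map_mul]
      congr 1
      linear_combination ((1 : K) / 2) * hda
    rw [Prod.ext_iff]
    constructor
    · rw [H1]
      simp only [Prod.fst_add, Prod.smul_fst, MvPolynomial.smul_eq_C_mul]
      rw [ca, cb]
      ring
    · rw [H2]
      simp only [Prod.snd_add, Prod.smul_snd, MvPolynomial.smul_eq_C_mul, smul_zero]
      rw [hc0, cd]
      simp only [map_zero, zero_mul]
      ring
end

section
/- Let i ≥ 0 be an integer and θ a real number. If ξ = (P, Q) ∈ V_i is i-liftably tangent to c_θ, then both X·ξ = (X·P, X·Q) and Y·ξ = (Y·P, Y·Q), which belong to V_{i+1}, are (i+1)-liftably tangent to c_θ. (Explicitly: if η ∈ K[x] witnesses the tangency of ξ, then η̃(x) = (x²cos θ − x³sin θ)·η(x) witnesses it for X·ξ, and η̃(x) = (x²sin θ + x³cos θ)·η(x) witnesses it for Y·ξ.) -/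
open Polynomial

open MvPolynomial in
/-- The multiplication step in the induction of the direct sum decomposition theorem:
if `ξ = (P, Q) ∈ V_i` is `i`-liftably tangent to `c_θ`, then `X·ξ = (X·P, X·Q)` and
`Y·ξ = (Y·P, Y·Q)` belong to `V_{i+1}` and are `(i+1)`-liftably tangent to `c_θ`. -/
theorem mul_coordinate_liftTang (K : Type*) [RCLike K] (i : ℕ) (θ : ℝ)
    (ξ : MvPolynomial (Fin 2) K × MvPolynomial (Fin 2) K) (hξ : ξ ∈ Vsp K i)
    (h : LiftTang K i θ ξ) :
    ((X 0 * ξ.1, X 0 * ξ.2) ∈ Vsp K (i + 1) ∧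
      LiftTang K (i + 1) θ (X 0 * ξ.1, X 0 * ξ.2)) ∧
    ((X 1 * ξ.1, X 1 * ξ.2) ∈ Vsp K (i + 1) ∧
      LiftTang K (i + 1) θ (X 1 * ξ.1, X 1 * ξ.2)) := by

  obtain ⟨hP, hQ⟩ := hξ
  obtain ⟨η, h1, h2⟩ := h
  have hX2 : (Polynomial.X : Polynomial K) ^ 2 ∣ cusp1 K θ := by
    refine ⟨Polynomial.C ((Real.cos θ : K)) - Polynomial.C ((Real.sin θ : K)) * Polynomial.X, ?_⟩
    simp [cusp1]; ring
  have hY2 : (Polynomial.X : Polynomial K) ^ 2 ∣ cusp2 K θ := by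
    refine ⟨Polynomial.C ((Real.sin θ : K)) + Polynomial.C ((Real.cos θ : K)) * Polynomial.X, ?_⟩
    simp [cusp2]; ring
  have heval : ∀ (j : Fin 2) (P : MvPolynomial (Fin 2) K),
      cuspEval K θ (X j * P) = ![cusp1 K θ, cusp2 K θ] j * cuspEval K θ P := by
    intro j P
    simp [cuspEval]
  have hmem : ∀ (j : Fin 2) (P : MvPolynomial (Fin 2) K),
      P ∈ homogeneousSubmodule (Fin 2) K i →
      X j * P ∈ homogeneousSubmodule (Fin 2) K (i + 1) := by
    intro j P hPm
    rw [mem_homogeneousSubmodule] at hPm ⊢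
    have := (isHomogeneous_X K j).mul hPm
    simpa [add_comm] using this
  have key : ∀ (c : Polynomial K) (A : Polynomial K) (d : Polynomial K),
      (Polynomial.X : Polynomial K) ^ 2 ∣ c →
      (Polynomial.X : Polynomial K) ^ (2 * i + 2) ∣ A - η * d →
      (Polynomial.X : Polynomial K) ^ (2 * (i + 1) + 2) ∣ c * A - c * η * d := by
    intro c A d hc hA
    have : c * A - c * η * d = c * (A - η * d) := by ring
    rw [this]
    have : 2 * (i + 1) + 2 = 2 + (2 * i + 2) := by ring
    rw [this, pow_add]
    exact mul_dvd_mul hc hA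
  refine ⟨⟨⟨hmem 0 _ hP, hmem 0 _ hQ⟩, ⟨cusp1 K θ * η, ?_, ?_⟩⟩,
    ⟨⟨hmem 1 _ hP, hmem 1 _ hQ⟩, ⟨cusp2 K θ * η, ?_, ?_⟩⟩⟩ <;>
    simp only [heval]
  · exact (by simpa [Matrix.cons_val_zero, mul_assoc] using key _ _ _ hX2 h1)
  · exact (by simpa [Matrix.cons_val_zero, mul_assoc] using key _ _ _ hX2 h2)
  · exact (by simpa [Matrix.cons_val_one, mul_assoc] using key _ _ _ hY2 h1)
  · exact (by simpa [Matrix.cons_val_one, mul_assoc] using key _ _ _ hY2 h2)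
end

section
/- For the standard cusp c(x) = (x², x³), there do not exist formal power series u, v ∈ K⟦X, Y⟧ and η ∈ K⟦x⟧ such that u(x², x³) + 2x·η(x) = 0 and v(x², x³) + 3x²·η(x) = x in K⟦x⟧. (That is, the vector field germ (0, x) along c does not belong to T𝒜_e(c) = T𝓡_e(c) + T𝓛_e(c); in particular θ_S(c) ≠ T𝒜_e(c), which is the fact underlying the non-surjectivity of the reduced Kodaira–Spencer–Mather map ω̄c_θ for every cusp c_θ.) -/
/-- Substitution of `(x², x³)` into a two-variable formal power series `u ∈ K⟦X, Y⟧`: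
the coefficient of `xⁿ` in `u(x², x³)` is the (finite) sum of the coefficients of
`X^a Y^b` in `u` over all `(a, b)` with `2a + 3b = n`.  This is the pullback
`c* : K⟦X, Y⟧ → K⟦x⟧` along the standard cusp `c(x) = (x², x³)`. -/
noncomputable def substCusp (K : Type*) [RCLike K] (u : MvPowerSeries (Fin 2) K) :
    PowerSeries K :=
  PowerSeries.mk fun n =>
    ∑ p ∈ (Finset.range (n + 1) ×ˢ Finset.range (n + 1)).filter
        (fun p : ℕ × ℕ => 2 * p.1 + 3 * p.2 = n),
      MvPowerSeries.coeff (R := K) (Finsupp.equivFunOnFinite.symm ![p.1, p.2]) u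

/-- For the standard cusp `c(x) = (x², x³)`, the vector field germ `(0, x)` along `c`
does not belong to `T𝒜_e(c) = T𝓡_e(c) + T𝓛_e(c)`: there are no formal power series
`u, v ∈ K⟦X, Y⟧` and `η ∈ K⟦x⟧` with `u(x², x³) + 2x·η(x) = 0` and
`v(x², x³) + 3x²·η(x) = x`.  This underlies the non-surjectivity of the reduced
Kodaira–Spencer–Mather map `ω̄c_θ` for every cusp. -/
theorem cusp_not_infinitesimally_stable (K : Type*) [RCLike K] :
    ¬ ∃ (u v : MvPowerSeries (Fin 2) K) (η : PowerSeries K),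
      substCusp K u + 2 * PowerSeries.X * η = 0 ∧
      substCusp K v + 3 * PowerSeries.X ^ 2 * η = PowerSeries.X := by
  rintro ⟨u, v, η, -, h2⟩
  have h := congrArg (PowerSeries.coeff (R := K) 1) h2
  have hfilter : (Finset.range 2 ×ˢ Finset.range 2).filter
      (fun p : ℕ × ℕ => 2 * p.1 + 3 * p.2 = 1) = ∅ := by decide
  have hX2 : (3 * PowerSeries.X ^ 2 * η : PowerSeries K)
      = PowerSeries.X * (PowerSeries.X * (3 * η)) := by ring
  rw [map_add, PowerSeries.coeff_one_X, hX2, PowerSeries.coeff_succ_X_mul] at h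
  simp [substCusp, hfilter, PowerSeries.coeff_zero_eq_constantCoeff] at h
end
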